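/- arXiv:2404.19078 — 13 statements merged into one kernel-verified Lean document; each statement's English description precedes it below -/
import Mathlib

section
/- For every integer d ≥ 1, the number of basal billiard partitions with exactly d parts equals f_d, where f_0 = 1, f_1 = 1 and f_d = f_{d−1} + f_{d−2}. -/
/-- An Euclidean billiard partition, recorded as the strictly decreasing list
`m₁ > m₂ > ⋯ > m_d` of its parts: a nonempty strictly decreasing list of positive
integers whose smallest (last) part is even and in which no two adjacent parts
are both odd. -/
def IsEBP (l : List ℕ) : Prop :=
  l ≠ [] ∧ l.Chain' (fun a b => b < a) ∧ (∀ x ∈ l, 0 < x) ∧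
    (∀ m ∈ l.getLast?, Even m) ∧ l.Chain' (fun a b => ¬(Odd a ∧ Odd b))

/-- A basal billiard partition: an Euclidean billiard partition whose smallest
part equals `2` and in which adjacent parts differ by at most `2`. -/
def IsBasal (l : List ℕ) : Prop :=
  IsEBP l ∧ l.getLast? = some 2 ∧ l.Chain' (fun a b => a - b ≤ 2)

/-- Up-step relation on the reversed list. -/
def BStep (a b : ℕ) : Prop := b = a + 1 ∨ (b = a + 2 ∧ Even a)

instance : DecidableRel BStep := fun a b => by unfold BStep; infer_instance

/-- Finset of `BStep`-chains of length `d+1` starting with `a`. -/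
def bchains : ℕ → ℕ → Finset (List ℕ)
  | a, 0 => {[a]}
  | a, d+1 => ((bchains (a+1) d).image (List.cons a)) ∪
      (if Even a then ((bchains (a+2) d).image (List.cons a)) else ∅)

lemma mem_bchains : ∀ d a (l : List ℕ),
    l ∈ bchains a d ↔ l.length = d + 1 ∧ l.head? = some a ∧ l.Chain' BStep := by
  intro d
  induction d with
  | zero =>
    intro a l
    simp only [bchains, Finset.mem_singleton]
    constructor
    · rintro rfl; simp [List.Chain']
    · rintro ⟨hl, hh, -⟩
      match l with
      | [x] => simp_all
  | succ d ih =>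
    intro a l
    simp only [bchains, Finset.mem_union, Finset.mem_image]
    constructor
    · rintro (⟨m, hm, rfl⟩ | h)
      · rw [ih] at hm
        obtain ⟨hlen, hh, hc⟩ := hm
        match m, hh with
        | b :: t, hh =>
          simp at hh; subst hh
          refine ⟨by simp [hlen], rfl, ?_⟩
          exact List.isChain_cons_cons.2 ⟨Or.inl rfl, hc⟩
      · split_ifs at h with hpar
        · rw [Finset.mem_image] at h
          obtain ⟨m, hm, rfl⟩ := h
          rw [ih] at hm
          obtain ⟨hlen, hh, hc⟩ := hm
          match m, hh with
          | b :: t, hh =>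
            simp at hh; subst hh
            refine ⟨by simp [hlen], rfl, ?_⟩
            exact List.isChain_cons_cons.2 ⟨Or.inr ⟨rfl, hpar⟩, hc⟩
        · exact absurd h (by simp)
    · rintro ⟨hlen, hh, hc⟩
      match l with
      | x :: b :: t =>
        simp at hh; subst hh
        rw [List.Chain', List.isChain_cons_cons] at hc
        obtain ⟨hs, hc⟩ := hc
        rcases hs with rfl | ⟨rfl, hpar⟩
        · exact Or.inl ⟨(x+1) :: t, (ih _ _).2 ⟨by simpa using hlen, rfl, hc⟩, rfl⟩
        · refine Or.inr ?_
          rw [if_pos hpar]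
          exact Finset.mem_image.2 ⟨(x+2) :: t, (ih _ _).2 ⟨by simpa using hlen, rfl, hc⟩, rfl⟩

lemma card_bchains (f : ℕ → ℕ)
    (h0 : f 0 = 1) (h1 : f 1 = 1) (hrec : ∀ n, f (n + 2) = f (n + 1) + f n) :
    ∀ d a, (bchains a d).card = if Even a then f (d+1) else f d := by
  intro d
  induction d with
  | zero => intro a; simp [bchains, h0, h1]
  | succ d ih =>
    intro a
    have hinj : Function.Injective (List.cons a) := fun x y h => by simpa using h
    by_cases hpar : Even a
    · have hdisj : Disjoint ((bchains (a+1) d).image (List.cons a))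
          ((bchains (a+2) d).image (List.cons a)) := by
        rw [Finset.disjoint_left]
        rintro x hx1 hx2
        obtain ⟨m1, hm1, rfl⟩ := Finset.mem_image.1 hx1
        obtain ⟨m2, hm2, he⟩ := Finset.mem_image.1 hx2
        have : m2 = m1 := by simpa using he
        subst this
        have g1 := ((mem_bchains d (a+1) m2).1 hm1).2.1
        have g2 := ((mem_bchains d (a+2) m2).1 hm2).2.1
        rw [g1] at g2; simp at g2
      rw [bchains, if_pos hpar, Finset.card_union_of_disjoint hdisj,
        Finset.card_image_of_injective _ hinj, Finset.card_image_of_injective _ hinj,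
        ih, ih, if_pos hpar]
      have : ¬ Even (a+1) := by simp [Nat.even_add_one, hpar]
      rw [if_neg this]
      have : Even (a+2) := by
        obtain ⟨k, hk⟩ := hpar; exact ⟨k+1, by omega⟩
      rw [if_pos this, hrec]
      omega
    · rw [bchains, if_neg hpar, Finset.union_empty,
        Finset.card_image_of_injective _ hinj, ih]
      have : Even (a+1) := by simpa [Nat.even_add_one] using hpar
      rw [if_pos this, if_neg hpar]

lemma basal_iff (l : List ℕ) :
    IsBasal l ↔ l.reverse.head? = some 2 ∧ l.reverse.Chain' BStep := by
  constructor
  · rintro ⟨⟨hne, hdec, -, -, hodd⟩, hlast, hdiff⟩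
    refine ⟨by rw [List.head?_reverse, hlast], ?_⟩
    rw [List.Chain', List.isChain_reverse]
    rw [List.Chain'] at hdec hodd hdiff; rw [List.isChain_iff_getElem] at hdec hodd hdiff ⊢
    intro i hi
    have H1 := hdec i hi
    have H2 := hodd i hi
    have H3 := hdiff i hi
    simp only [Nat.odd_iff, not_and] at H2
    show BStep _ _
    simp only [BStep, Nat.even_iff]
    omega
  · rintro ⟨hh, hc⟩
    have hne : l ≠ [] := by
      intro h; rw [h] at hh; simp at hh
    have hlast : l.getLast? = some 2 := by rw [← List.head?_reverse, hh]
    have hlt : l.reverse.Chain' (· < ·) := hc.imp (fun a b h => by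
      rcases h with h | ⟨h, -⟩ <;> omega)
    have hpos : ∀ x ∈ l, 0 < x := by
      intro x hx
      rw [List.Chain', List.isChain_iff_pairwise] at hlt
      match hr : l.reverse, hh' : (l.reverse).head? with
      | a :: t, _ =>
        rw [hr] at hh hlt
        simp at hh; subst hh
        rw [← List.mem_reverse, hr] at hx
        rcases List.mem_cons.1 hx with rfl | hx
        · omega
        · have := (List.pairwise_cons.1 hlt).1 x hx; omega
      | [], _ => simp [hr] at hh
    have key : ∀ (R : ℕ → ℕ → Prop), (∀ a b, BStep a b → R b a) → l.Chain' R := by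
      intro R hR
      have := hc.imp (fun a b h => hR a b h)
      rw [List.isChain_reverse] at this
      exact this
    refine ⟨⟨hne, ?_, hpos, ?_, ?_⟩, hlast, ?_⟩
    · exact key _ (fun a b h => by rcases h with h | ⟨h, -⟩ <;> omega)
    · intro m hm; rw [hlast] at hm; simp at hm; subst hm; exact ⟨1, rfl⟩
    · exact key _ (fun a b h => by
        rcases h with rfl | ⟨rfl, he⟩
        · simp only [Nat.odd_iff, not_and]; omega
        · rw [Nat.even_iff] at he
          simp only [Nat.odd_iff, not_and]; omega)
    · exact key _ (fun a b h => by rcases h with h | ⟨h, -⟩ <;> omega)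

/-- For every `d ≥ 1`, the number of basal billiard partitions with exactly `d`
parts equals `f d`, where `f 0 = 1`, `f 1 = 1`, `f (d+2) = f (d+1) + f d`. -/
theorem number_of_basal_billiard_partitions (f : ℕ → ℕ)
    (h0 : f 0 = 1) (h1 : f 1 = 1) (hrec : ∀ n, f (n + 2) = f (n + 1) + f n) :
    ∀ d : ℕ, 1 ≤ d → {l : List ℕ | IsBasal l ∧ l.length = d}.ncard = f d := by
  intro d hd
  obtain ⟨e, rfl⟩ : ∃ e, d = e + 1 := ⟨d - 1, by omega⟩
  have hset : {l : List ℕ | IsBasal l ∧ l.length = e + 1} =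
      ↑((bchains 2 e).image List.reverse) := by
    ext l
    simp only [Set.mem_setOf_eq, Finset.coe_image, Set.mem_image, Finset.mem_coe]
    constructor
    · rintro ⟨hb, hlen⟩
      refine ⟨l.reverse, ?_, by simp⟩
      rw [mem_bchains]
      obtain ⟨hh, hc⟩ := (basal_iff l).1 hb
      exact ⟨by simpa using hlen, hh, hc⟩
    · rintro ⟨m, hm, rfl⟩
      rw [mem_bchains] at hm
      obtain ⟨hlen, hh, hc⟩ := hm
      refine ⟨(basal_iff _).2 ⟨by simpa using hh, by simpa using hc⟩, by simpa using hlen⟩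
  rw [hset, Set.ncard_coe_finset,
    Finset.card_image_of_injective _ List.reverse_injective,
    card_bchains f h0 h1 hrec]
  simp
end

section
/- For every integer d ≥ 1, the number of basal billiard partitions with exactly d parts whose largest part is an even number equals f_{d−1}, where f_0 = 1, f_1 = 1 and f_d = f_{d−1} + f_{d−2}. -/
lemma isBasal_cons (a h : ℕ) (t : List ℕ) :
    IsBasal (a :: h :: t) ↔ IsBasal (h :: t) ∧ h < a ∧ a - h ≤ 2 ∧ ¬(Odd a ∧ Odd h) := by
  unfold IsBasal IsEBP
  simp only [List.Chain', List.isChain_cons_cons, List.getLast?_cons_cons, List.mem_cons, ne_eq,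
    reduceCtorEq, not_false_iff, forall_eq_or_imp, true_and, Option.mem_def]
  constructor
  · rintro ⟨⟨⟨hlt, hc⟩, ⟨hpa, hpos⟩, hlast, ⟨hodd, hco⟩⟩, hl2, hd, hcd⟩
    exact ⟨⟨⟨hc, hpos, hlast, hco⟩, hl2, hcd⟩, hlt, hd, hodd⟩
  · rintro ⟨⟨⟨hc, hpos, hlast, hco⟩, hl2, hcd⟩, hlt, hd, hodd⟩
    exact ⟨⟨⟨hlt, hc⟩, ⟨Nat.lt_of_le_of_lt (Nat.zero_le h) hlt, hpos⟩, hlast, hodd, hco⟩, hl2, hd, hcd⟩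

def S (d : ℕ) : Set (List ℕ) :=
  {l : List ℕ | IsBasal l ∧ l.length = d ∧ ∃ m, l.head? = some m ∧ Even m}

lemma mem_S_cons (a : ℕ) (t : List ℕ) (d : ℕ) :
    (a :: t) ∈ S d ↔ IsBasal (a :: t) ∧ t.length + 1 = d ∧ Even a := by
  simp [S, List.head?]

lemma S_ne_nil {d : ℕ} {l : List ℕ} (h : l ∈ S d) : l ≠ [] := h.1.1.1

lemma head_even {a : ℕ} {t : List ℕ} {d : ℕ} (h : (a :: t) ∈ S d) : Even a :=
  ((mem_S_cons a t d).1 h).2.2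

lemma S_decomp (d : ℕ) :
    S (d + 2) = (fun t : List ℕ => (t.headI + 2) :: t) '' S (d + 1) ∪
      (fun t : List ℕ => (t.headI + 2) :: (t.headI + 1) :: t) '' S d := by
  ext l
  simp only [Set.mem_union, Set.mem_image]
  constructor
  · intro hl
    obtain ⟨hb, hlen, m, hm, hme⟩ := hl
    match l, hlen with
    | a :: b :: t, hlen =>
    have ham : a = m := by simpa using hm
    subst ham
    rw [isBasal_cons] at hb
    obtain ⟨hbt, hlt, hdiff, hpar⟩ := hb
    by_cases hbe : Even b
    · left
      refine ⟨b :: t, ?_, ?_⟩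
      · rw [mem_S_cons]
        exact ⟨hbt, by simpa using hlen, hbe⟩
      · rw [List.headI_cons]
        have : a = b + 2 := by
          rw [Nat.even_iff] at hme hbe; omega
        rw [this]
    · have hbo : Odd b := Nat.odd_iff.2 (by rw [Nat.even_iff] at hbe; omega)
      match t with
      | [] =>
        exfalso
        have h2 : (b :: ([] : List ℕ)).getLast? = some 2 := hbt.2.1
        simp at h2
        rw [Nat.odd_iff] at hbo
        omega
      | c :: u =>
        right
        rw [isBasal_cons] at hbt
        obtain ⟨hcu, hlt2, hdiff2, hpar2⟩ := hbt
        have hce : Even c := by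
          by_contra hco
          exact hpar2 ⟨hbo, Nat.odd_iff.2 (by rw [Nat.even_iff] at hco; omega)⟩
        have hb1 : b = c + 1 := by
          rw [Nat.odd_iff] at hbo; rw [Nat.even_iff] at hce; omega
        have ha1 : a = c + 2 := by
          rw [Nat.even_iff] at hme; rw [Nat.odd_iff] at hbo; omega
        refine ⟨c :: u, ?_, ?_⟩
        · rw [mem_S_cons]
          exact ⟨hcu, by simpa using hlen, hce⟩
        · rw [List.headI_cons, ha1, hb1]
  · rintro (⟨t, ht, rfl⟩ | ⟨t, ht, rfl⟩)
    · obtain ⟨b, u, rfl⟩ := List.exists_cons_of_ne_nil (S_ne_nil ht)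
      have hbe := head_even ht
      have hbemod := Nat.even_iff.1 hbe
      obtain ⟨hbt, hlen, -⟩ := (mem_S_cons b u (d+1)).1 ht
      rw [List.headI_cons]
      rw [mem_S_cons, isBasal_cons]
      refine ⟨⟨hbt, by simp, by simp, ?_⟩, by simpa using hlen, by rw [Nat.even_iff]; omega⟩
      rintro ⟨-, hbo⟩
      rw [Nat.odd_iff] at hbo
      omega
    · obtain ⟨b, u, rfl⟩ := List.exists_cons_of_ne_nil (S_ne_nil ht)
      have hbe := head_even ht
      have hbemod := Nat.even_iff.1 hbe
      obtain ⟨hbt, hlen, -⟩ := (mem_S_cons b u d).1 ht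
      rw [List.headI_cons]
      rw [mem_S_cons, isBasal_cons, isBasal_cons]
      refine ⟨⟨⟨hbt, by simp, by simp, ?_⟩, by simp, by simp, ?_⟩,
        by simpa using hlen, by rw [Nat.even_iff]; omega⟩
      · rintro ⟨-, ho⟩; rw [Nat.odd_iff] at ho; omega
      · rintro ⟨ho, -⟩; rw [Nat.odd_iff] at ho; omega

lemma S_one : S 1 = {[2]} := by
  ext l
  constructor
  · rintro ⟨hb, hlen, -⟩
    match l, hlen with
    | [x], _ =>
      have h2 : ([x] : List ℕ).getLast? = some 2 := hb.2.1
      simp at h2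
      subst h2
      rfl
  · rintro rfl
    refine ⟨⟨⟨by simp, by simp [List.Chain'], by simp, by simp, by simp [List.Chain']⟩, by simp, by simp [List.Chain']⟩, by simp, 2, by simp, by norm_num⟩

lemma S_two : S 2 = {[4, 2]} := by
  ext l
  constructor
  · rintro ⟨hb, hlen, m, hm, hme⟩
    match l, hlen with
    | [a, b], _ =>
      have ham : a = m := by simpa using hm
      subst ham
      rw [isBasal_cons] at hb
      obtain ⟨hbt, hlt, hdiff, -⟩ := hb
      have h2 : ([b] : List ℕ).getLast? = some 2 := hbt.2.1
      simp at h2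
      subst h2
      have : a = 4 := by rw [Nat.even_iff] at hme; omega
      simp [this]
  · rintro rfl
    refine ⟨?_, by simp, 4, by simp, ⟨2, by norm_num⟩⟩
    rw [isBasal_cons]
    refine ⟨⟨⟨by simp, by simp [List.Chain'], by simp, by simp, by simp [List.Chain']⟩, by simp, by simp [List.Chain']⟩, by norm_num, by norm_num, ?_⟩
    rintro ⟨ho, -⟩
    rw [Nat.odd_iff] at ho
    omega

lemma S_aux (f : ℕ → ℕ) (h0 : f 0 = 1) (h1 : f 1 = 1)
    (hrec : ∀ n, f (n + 2) = f (n + 1) + f n) :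
    ∀ n : ℕ, (S (n + 1)).Finite ∧ (S (n + 1)).ncard = f n := by
  intro n
  induction n using Nat.twoStepInduction with
  | zero => rw [S_one]; exact ⟨Set.finite_singleton _, by simp [h0]⟩
  | one => rw [S_two]; exact ⟨Set.finite_singleton _, by simp [h1]⟩
  | more n ih1 ih2 =>
    obtain ⟨hfin1, hcard1⟩ := ih1
    obtain ⟨hfin2, hcard2⟩ := ih2
    rw [show n + 2 + 1 = (n + 1) + 2 by ring, S_decomp (n + 1)]
    have hinj1 : Set.InjOn (fun t : List ℕ => (t.headI + 2) :: t) (S (n + 2)) :=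
      fun x _ y _ h => (List.cons.inj h).2
    have hinj2 : Set.InjOn (fun t : List ℕ => (t.headI + 2) :: (t.headI + 1) :: t) (S (n + 1)) :=
      fun x _ y _ h => (List.cons.inj (List.cons.inj h).2).2
    have hfA : ((fun t : List ℕ => (t.headI + 2) :: t) '' S (n + 2)).Finite :=
      hfin2.image _
    have hfB : ((fun t : List ℕ => (t.headI + 2) :: (t.headI + 1) :: t) '' S (n + 1)).Finite :=
      hfin1.image _

    have hdisj : Disjoint ((fun t : List ℕ => (t.headI + 2) :: t) '' S (n + 2))
        ((fun t : List ℕ => (t.headI + 2) :: (t.headI + 1) :: t) '' S (n + 1)) := by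
      rw [Set.disjoint_left]
      rintro l ⟨t1, ht1, rfl⟩ ⟨t2, ht2, heq⟩
      obtain ⟨c, u, rfl⟩ := List.exists_cons_of_ne_nil (S_ne_nil ht2)
      have hc := Nat.even_iff.1 (head_even ht2)
      simp only [List.headI_cons] at heq
      have ht1e : t1 = (c + 1) :: c :: u := ((List.cons.inj heq).2).symm
      subst ht1e
      have := Nat.even_iff.1 (head_even ht1)
      omega
    constructor
    · exact hfA.union hfB
    · rw [Set.ncard_union_eq hdisj hfA hfB, Set.ncard_image_of_injOn hinj1,
        Set.ncard_image_of_injOn hinj2, hcard2, hcard1, hrec]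

/-- For every `d ≥ 1`, the number of basal billiard partitions with exactly `d`
parts whose largest part is an even number equals `f (d-1)`. -/
theorem number_of_basal_billiard_partitions_even_largest (f : ℕ → ℕ)
    (h0 : f 0 = 1) (h1 : f 1 = 1) (hrec : ∀ n, f (n + 2) = f (n + 1) + f n) :
    ∀ d : ℕ, 1 ≤ d →
      {l : List ℕ | IsBasal l ∧ l.length = d ∧
        ∃ m, l.head? = some m ∧ Even m}.ncard = f (d - 1) := by
  intro d hd
  obtain ⟨n, rfl⟩ : ∃ n, d = n + 1 := ⟨d - 1, by omega⟩
  show (S (n + 1)).ncard = f (n + 1 - 1)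
  simpa using (S_aux f h0 h1 hrec n).2
end

section
/- For every integer d ≥ 2, the number of basal billiard partitions with exactly d parts whose largest part is an odd number equals f_{d−2}, where f_0 = 1, f_1 = 1 and f_d = f_{d−1} + f_{d−2}. -/
namespace BBPaux

def S (d : ℕ) : Set (List ℕ) :=
  {l | IsBasal l ∧ l.length = d ∧ ∃ m, l.head? = some m ∧ Odd m}

def T (d : ℕ) : Set (List ℕ) :=
  {l | IsBasal l ∧ l.length = d ∧ ∃ m, l.head? = some m ∧ Even m}

lemma basal_cons_iff {m b : ℕ} {l : List ℕ} :
    IsBasal (m :: b :: l) ↔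
      IsBasal (b :: l) ∧ b < m ∧ m - b ≤ 2 ∧ ¬(Odd m ∧ Odd b) := by
  constructor
  · rintro ⟨⟨-, hchain, hpos, hlast, hodd⟩, hl2, hdiff⟩
    simp only [List.Chain', List.isChain_cons_cons] at hchain hodd hdiff
    rw [List.getLast?_cons_cons] at hlast hl2
    exact ⟨⟨⟨by simp, hchain.2, fun x hx => hpos x (by simp [hx]), hlast, hodd.2⟩,
      hl2, hdiff.2⟩, hchain.1, hdiff.1, hodd.1⟩
  · rintro ⟨⟨⟨-, hchain, hpos, hlast, hodd⟩, hl2, hdiff⟩, hbm, hmb, hno⟩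
    refine ⟨⟨by simp, ?_, ?_, ?_, ?_⟩, ?_, ?_⟩
    · simp only [List.Chain', List.isChain_cons_cons]; exact ⟨hbm, hchain⟩
    · intro x hx
      rcases List.mem_cons.1 hx with rfl | hx
      · exact lt_trans (hpos b (by simp)) hbm
      · exact hpos x hx
    · rw [List.getLast?_cons_cons]; exact hlast
    · simp only [List.Chain', List.isChain_cons_cons]; exact ⟨hno, hodd⟩
    · rw [List.getLast?_cons_cons]; exact hl2
    · simp only [List.Chain', List.isChain_cons_cons]; exact ⟨hmb, hdiff⟩

def ext1 (l : List ℕ) : List ℕ := (l.head?.getD 0 + 1) :: l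
def ext2 (l : List ℕ) : List ℕ := (l.head?.getD 0 + 2) :: l

lemma ext1_inj : Function.Injective ext1 := by
  intro a b h
  exact (List.cons.injEq _ _ _ _ ▸ h).2

lemma ext2_inj : Function.Injective ext2 := by
  intro a b h
  exact (List.cons.injEq _ _ _ _ ▸ h).2

lemma T_one : T 1 = {[2]} := by
  ext l
  constructor
  · rintro ⟨⟨-, hl2, -⟩, hlen, -⟩
    match l, hlen with
    | [a], _ =>
      simp only [List.getLast?_singleton, Option.some.injEq] at hl2
      simp [hl2]
  · rintro rfl
    refine ⟨⟨⟨by simp, List.isChain_singleton _, by simp, by simp, List.isChain_singleton _⟩, by simp, List.isChain_singleton _⟩,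
      by simp, 2, by simp, by decide⟩

lemma S_one : S 1 = ∅ := by
  ext l
  simp only [S, Set.mem_setOf_eq, Set.mem_empty_iff_false, iff_false]
  rintro ⟨⟨-, hl2, -⟩, hlen, m, hm, hodd⟩
  match l, hlen with
  | [a], _ =>
    simp only [List.getLast?_singleton, Option.some.injEq] at hl2
    simp only [List.head?_cons, Option.some.injEq] at hm
    rw [Nat.odd_iff] at hodd
    omega

lemma S_succ (d : ℕ) : S (d + 2) = ext1 '' T (d + 1) := by
  ext l
  constructor
  · rintro ⟨hb, hlen, m, hm, hodd⟩
    match l with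
    | m' :: b :: t =>
      simp only [List.head?_cons, Option.some.injEq] at hm
      subst hm
      rw [basal_cons_iff] at hb
      obtain ⟨hbt, hlt, hle, hno⟩ := hb
      have hbe : Even b := by
        by_contra he
        exact hno ⟨hodd, Nat.not_even_iff_odd.1 he⟩
      have : m' = b + 1 := by
        rw [Nat.odd_iff] at hodd
        rw [Nat.even_iff] at hbe
        omega
      subst this
      refine ⟨b :: t, ⟨hbt, by simpa using hlen, b, rfl, hbe⟩, ?_⟩
      simp [ext1]
  · rintro ⟨l', ⟨hb, hlen, m, hm, he⟩, rfl⟩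
    match l' with
    | b :: t =>
      simp only [List.head?_cons, Option.some.injEq] at hm
      subst hm
      simp only [ext1, List.head?_cons, Option.getD_some]
      have hno : ¬(Odd (b + 1) ∧ Odd b) := by
        rw [Nat.even_iff] at he
        rintro ⟨-, h2⟩
        rw [Nat.odd_iff] at h2
        omega
      refine ⟨basal_cons_iff.2 ⟨hb, by omega, by omega, hno⟩, by simpa using hlen,
        b + 1, rfl, ?_⟩
      rw [Nat.even_iff] at he
      rw [Nat.odd_iff]
      omega

lemma T_succ (d : ℕ) : T (d + 2) = ext2 '' T (d + 1) ∪ ext1 '' S (d + 1) := by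
  ext l
  constructor
  · rintro ⟨hb, hlen, m, hm, heven⟩
    match l with
    | m' :: b :: t =>
      simp only [List.head?_cons, Option.some.injEq] at hm
      subst hm
      rw [basal_cons_iff] at hb
      obtain ⟨hbt, hlt, hle, hno⟩ := hb
      rcases Nat.even_or_odd b with hbe | hbo
      · -- b even : m = b + 2
        have : m' = b + 2 := by
          rw [Nat.even_iff] at heven hbe
          omega
        subst this
        exact Or.inl ⟨b :: t, ⟨hbt, by simpa using hlen, b, rfl, hbe⟩, by simp [ext2]⟩
      · -- b odd : m = b + 1
        have : m' = b + 1 := by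
          rw [Nat.even_iff] at heven
          rw [Nat.odd_iff] at hbo
          omega
        subst this
        exact Or.inr ⟨b :: t, ⟨hbt, by simpa using hlen, b, rfl, hbo⟩, by simp [ext1]⟩
  · rintro (⟨l', ⟨hb, hlen, m, hm, he⟩, rfl⟩ | ⟨l', ⟨hb, hlen, m, hm, ho⟩, rfl⟩)
    · match l' with
      | b :: t =>
        simp only [List.head?_cons, Option.some.injEq] at hm
        subst hm
        simp only [ext2, List.head?_cons, Option.getD_some]
        rw [Nat.even_iff] at he
        have hno : ¬(Odd (b + 2) ∧ Odd b) := by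
          rintro ⟨-, h2⟩; rw [Nat.odd_iff] at h2; omega
        refine ⟨basal_cons_iff.2 ⟨hb, by omega, by omega, hno⟩, by simpa using hlen,
          b + 2, rfl, by rw [Nat.even_iff]; omega⟩
    · match l' with
      | b :: t =>
        simp only [List.head?_cons, Option.some.injEq] at hm
        subst hm
        simp only [ext1, List.head?_cons, Option.getD_some]
        rw [Nat.odd_iff] at ho
        have hno : ¬(Odd (b + 1) ∧ Odd b) := by
          rintro ⟨h1, -⟩; rw [Nat.odd_iff] at h1; omega
        refine ⟨basal_cons_iff.2 ⟨hb, by omega, by omega, hno⟩, by simpa using hlen,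
          b + 1, rfl, by rw [Nat.even_iff]; omega⟩

lemma finite_ST : ∀ d, (S (d + 1)).Finite ∧ (T (d + 1)).Finite := by
  intro d
  induction d with
  | zero => exact ⟨by rw [S_one]; exact Set.finite_empty, by rw [T_one]; exact Set.finite_singleton _⟩
  | succ n ih =>
    exact ⟨by rw [S_succ]; exact ih.2.image _,
      by rw [T_succ]; exact ((ih.2.image _).union (ih.1.image _))⟩

lemma disj (d : ℕ) : Disjoint (ext2 '' T (d + 1)) (ext1 '' S (d + 1)) := by
  rw [Set.disjoint_left]
  rintro x ⟨l1, ⟨-, -, m1, hm1, he⟩, rfl⟩ ⟨l2, ⟨-, -, m2, hm2, ho⟩, heq⟩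
  have : l2 = l1 := (List.cons.injEq _ _ _ _ ▸ heq).2
  subst this
  rw [hm1] at hm2
  obtain rfl : m1 = m2 := by simpa using hm2
  rw [Nat.even_iff] at he
  rw [Nat.odd_iff] at ho
  omega

lemma T_card (f : ℕ → ℕ) (h0 : f 0 = 1) (h1 : f 1 = 1)
    (hrec : ∀ n, f (n + 2) = f (n + 1) + f n) :
    ∀ n, (T (n + 1)).ncard = f n := by
  intro n
  induction n using Nat.strong_induction_on with
  | _ n ih =>
    match n with
    | 0 => rw [T_one, h0]; simp
    | 1 =>
      rw [T_succ, S_one, Set.image_empty, Set.union_empty,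
        Set.ncard_image_of_injective _ ext2_inj, ih 0 (by omega), h0, h1]
    | (k + 2) =>
      rw [T_succ, Set.ncard_union_eq (disj _) ((finite_ST _).2.image _)
        ((finite_ST _).1.image _), Set.ncard_image_of_injective _ ext2_inj,
        Set.ncard_image_of_injective _ ext1_inj, S_succ,
        Set.ncard_image_of_injective _ ext1_inj, ih (k + 1) (by omega),
        ih k (by omega), hrec]

end BBPaux

/-- For every `d ≥ 2`, the number of basal billiard partitions with exactly `d`
parts whose largest part is an odd number equals `f (d-2)`. -/
theorem number_of_basal_billiard_partitions_odd_largest (f : ℕ → ℕ)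
    (h0 : f 0 = 1) (h1 : f 1 = 1) (hrec : ∀ n, f (n + 2) = f (n + 1) + f n) :
    ∀ d : ℕ, 2 ≤ d →
      {l : List ℕ | IsBasal l ∧ l.length = d ∧
        ∃ m, l.head? = some m ∧ Odd m}.ncard = f (d - 2) := by
  intro d hd
  obtain ⟨k, rfl⟩ : ∃ k, d = k + 2 := ⟨d - 2, by omega⟩
  have : {l : List ℕ | IsBasal l ∧ l.length = k + 2 ∧
      ∃ m, l.head? = some m ∧ Odd m} = BBPaux.S (k + 2) := rfl
  rw [this, BBPaux.S_succ, Set.ncard_image_of_injective _ BBPaux.ext1_inj,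
    BBPaux.T_card f h0 h1 hrec]
  simp
end

section
/- Let π = (m_1 > m_2 > ⋯ > m_d) be an Euclidean billiard partition. Then the following are equivalent: (i) for every index i, decreasing the part m_i by 2 (keeping all other parts fixed) does not produce an Euclidean billiard partition with d parts; (ii) m_d = 2 and m_i − m_{i+1} ≤ 2 for all 1 ≤ i < d (i.e., π is a basal billiard partition). -/
lemma isEBP_iff {l : List ℕ} (hl : 0 < l.length) :
    IsEBP l ↔ (∀ i, (h : i + 1 < l.length) → l[i+1] < l[i]) ∧
      (∀ i, (h : i < l.length) → 0 < l[i]) ∧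
      Even (l[l.length - 1]'(by omega)) ∧
      (∀ i, (h : i + 1 < l.length) → ¬(Odd (l[i]'(by omega)) ∧ Odd (l[i+1]))) := by
  have hne : l ≠ [] := List.ne_nil_of_length_pos hl
  have hgl : l.getLast? = some (l[l.length - 1]'(by omega)) := by
    rw [List.getLast?_eq_getLast hne, List.getLast_eq_getElem]
  constructor
  · rintro ⟨-, hdec, hpos, hlast, hpar⟩
    have hdec' := List.isChain_iff_getElem.mp hdec
    have hpar' := List.isChain_iff_getElem.mp hpar
    refine ⟨fun i hi => hdec' i (by omega), fun i hi => hpos _ (List.getElem_mem _),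
      hlast _ (by rw [hgl]; rfl), fun i hi => hpar' i (by omega)⟩
  · rintro ⟨hdec, hpos, hlast, hpar⟩
    refine ⟨hne, ?_, ?_, ?_, ?_⟩
    · apply List.isChain_iff_getElem.mpr
      intro i hi
      exact hdec i (by omega)
    · intro x hx
      obtain ⟨i, hi, rfl⟩ := List.mem_iff_getElem.mp hx
      exact hpos i hi
    · intro m hm
      rw [hgl, Option.mem_some_iff] at hm
      exact hm ▸ hlast
    · apply List.isChain_iff_getElem.mpr
      intro i hi
      exact hpar i (by omega)

set_option maxHeartbeats 1600000 in
/-- For an Euclidean billiard partition `π = (m₁ > ⋯ > m_d)`, the following are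
equivalent: (i) for every index `i`, decreasing the part `m_i` by `2` (keeping
all other parts fixed) does not produce an Euclidean billiard partition with
`d` parts; (ii) `m_d = 2` and `m_i − m_{i+1} ≤ 2` for all `1 ≤ i < d`, i.e. `π`
is a basal billiard partition. -/
theorem basal_iff_no_part_reducible (l : List ℕ) (h : IsEBP l) :
    (∀ i : Fin l.length, ¬ IsEBP (l.set i (l.get i - 2))) ↔
      (l.getLast? = some 2 ∧ l.Chain' (fun a b => a - b ≤ 2)) := by
  have hn : 0 < l.length := List.length_pos_iff.mpr h.1
  have hgl : l.getLast? = some (l[l.length - 1]'(by omega)) := by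
    rw [List.getLast?_eq_getLast h.1, List.getLast_eq_getElem]
  obtain ⟨hdec, hpos, hlastEven, hpar⟩ := (isEBP_iff hn).mp h
  have hset : ∀ (j : ℕ) (v : ℕ), IsEBP (l.set j v) ↔
      (∀ i, (h : i + 1 < l.length) → (if j = i+1 then v else l[i+1]) <
        (if j = i then v else l[i]'(by omega))) ∧
      (∀ i, (h : i < l.length) → 0 < (if j = i then v else l[i])) ∧
      Even (if j = l.length - 1 then v else l[l.length - 1]'(by omega)) ∧
      (∀ i, (h : i + 1 < l.length) →
        ¬(Odd (if j = i then v else l[i]'(by omega)) ∧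
          Odd (if j = i+1 then v else l[i+1]))) := by
    intro j v
    rw [isEBP_iff (by simpa using hn)]
    simp only [List.length_set, List.getElem_set]
  constructor
  · intro H
    simp only [List.get_eq_getElem] at H
    have H' : ∀ (j : ℕ) (hj : j < l.length), ¬ IsEBP (l.set j (l[j] - 2)) :=
      fun j hj => H ⟨j, hj⟩
    have h2 : l[l.length - 1]'(by omega) = 2 := by
      by_contra hne2
      have h4 : 4 ≤ l[l.length - 1]'(by omega) := by
        obtain ⟨k, hk⟩ := hlastEven
        have := hpos (l.length - 1) (by omega)
        omega
      apply H' (l.length - 1) (by omega)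
      rw [hset]
      refine ⟨?_, ?_, ?_, ?_⟩
      · intro i hi
        have hd1 := hdec i hi
        rw [if_neg (show ¬ l.length - 1 = i by omega)]
        by_cases hb : l.length - 1 = i + 1
        · rw [if_pos hb]
          have he : l[i+1] = l[l.length - 1]'(by omega) := by congr 1; omega
          omega
        · rw [if_neg hb]; exact hd1
      · intro i hi
        split_ifs with ha
        · omega
        · exact hpos i hi
      · rw [if_pos rfl]
        obtain ⟨k, hk⟩ := hlastEven
        exact ⟨k - 1, by omega⟩
      · intro i hi
        have hp := hpar i hi
        rw [if_neg (show ¬ l.length - 1 = i by omega)]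
        by_cases hb : l.length - 1 = i + 1
        · rw [if_pos hb]
          rintro ⟨-, ho⟩
          obtain ⟨k, hk⟩ := hlastEven
          rw [Nat.odd_iff] at ho
          omega
        · rw [if_neg hb]; exact hp
    refine ⟨by rw [hgl, h2], ?_⟩
    apply List.isChain_iff_getElem.mpr
    intro j hj
    by_contra hgap
    push_neg at hgap
    apply H' j (by omega)
    rw [hset]
    have hd := hdec j (by omega)
    have hp1 : 0 < l[j+1]'(by omega) := hpos _ (by omega)
    refine ⟨?_, ?_, ?_, ?_⟩
    · intro i hi
      have hd1 := hdec i hi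
      by_cases ha : j = i
      · rw [if_neg (by omega), if_pos ha]
        have he : l[i+1] = l[j+1]'(by omega) := by congr 1; omega
        omega
      · rw [if_neg ha]
        by_cases hb : j = i + 1
        · rw [if_pos hb]
          have he : l[i+1] = l[j]'(by omega) := by congr 1; omega
          omega
        · rw [if_neg hb]; exact hd1
    · intro i hi
      split_ifs with ha
      · omega
      · exact hpos i hi
    · rw [if_neg (by omega)]
      exact hlastEven
    · intro i hi
      have hp := hpar i hi
      by_cases ha : j = i
      · rw [if_pos ha, if_neg (by omega)]
        rintro ⟨ho1, ho2⟩
        refine hp ⟨?_, ho2⟩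
        have he : l[i]'(by omega) = l[j]'(by omega) := by congr 1; omega
        rw [he, Nat.odd_iff]
        rw [Nat.odd_iff] at ho1
        omega
      · rw [if_neg ha]
        by_cases hb : j = i + 1
        · rw [if_pos hb]
          rintro ⟨ho1, ho2⟩
          refine hp ⟨ho1, ?_⟩
          have he : l[i+1] = l[j]'(by omega) := by congr 1; omega
          rw [he, Nat.odd_iff]
          rw [Nat.odd_iff] at ho2
          omega
        · rw [if_neg hb]; exact hp
  · rintro ⟨h2, hgap⟩ i hEBP
    simp only [List.get_eq_getElem] at hEBP
    rw [hset] at hEBP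
    obtain ⟨hdec2, hpos2, -, -⟩ := hEBP
    have hgap' := List.isChain_iff_getElem.mp hgap
    rcases Nat.lt_or_ge (i : ℕ) (l.length - 1) with hi | hi
    · have hc := hdec2 i (by omega)
      rw [if_pos rfl, if_neg (by omega)] at hc
      have hg := hgap' i (by omega)
      have hd := hdec i (by omega)
      omega
    · have hi' : (i : ℕ) = l.length - 1 := by
        have := i.2; omega
      have hval : l[(i : ℕ)] = 2 := by
        rw [hgl, Option.some_inj] at h2
        rw [← h2]; congr 1
      have := hpos2 i i.2
      rw [if_pos rfl] at this
      omega
end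

section
/- Let π = (m_1 > m_2 > ⋯ > m_d) be an Euclidean billiard partition with d parts. Then there exist a unique basal billiard partition (b_1 > b_2 > ⋯ > b_d) with d parts and unique even integers p_1 ≥ p_2 ≥ ⋯ ≥ p_d ≥ 0 such that m_i = b_i + p_i for all i. Conversely, for every basal billiard partition (b_1 > ⋯ > b_d) and every sequence of even integers p_1 ≥ p_2 ≥ ⋯ ≥ p_d ≥ 0, the sequence (b_1 + p_1, …, b_d + p_d) is an Euclidean billiard partition with d parts. -/
def cntE (l : List ℕ) : ℕ := l.countP (fun x => x % 2 == 0)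

def bas : List ℕ → List ℕ
  | [] => []
  | a :: t => (2 * cntE (a :: t) + a % 2) :: bas t

lemma cntE_cons (a : ℕ) (l : List ℕ) :
    cntE (a :: l) = cntE l + if a % 2 = 0 then 1 else 0 := by
  simp [cntE, List.countP_cons]

lemma bas_cons (a : ℕ) (t : List ℕ) :
    bas (a :: t) = (2 * cntE (a :: t) + a % 2) :: bas t := rfl

lemma bas_length : ∀ l : List ℕ, (bas l).length = l.length
  | [] => rfl
  | a :: t => by simp [bas, bas_length t]

lemma isEBP_tail {a b : ℕ} {t : List ℕ} (h : IsEBP (a :: b :: t)) :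
    IsEBP (b :: t) ∧ b < a ∧ ¬(Odd a ∧ Odd b) := by
  obtain ⟨-, hc, hp, hl, ho⟩ := h
  unfold List.Chain' at hc ho
  rw [List.isChain_cons_cons] at hc ho
  exact ⟨⟨by simp, hc.2, fun x hx => hp x (List.mem_cons_of_mem _ hx),
    by rwa [List.getLast?_cons_cons] at hl, ho.2⟩, hc.1, ho.1⟩

lemma isBasal_tail {a b : ℕ} {t : List ℕ} (h : IsBasal (a :: b :: t)) :
    IsBasal (b :: t) ∧ b < a ∧ a - b ≤ 2 ∧ ¬(Odd a ∧ Odd b) := by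
  obtain ⟨he, hl, hs⟩ := h
  obtain ⟨he', h1, h2⟩ := isEBP_tail he
  unfold List.Chain' at hs
  rw [List.isChain_cons_cons] at hs
  rw [List.getLast?_cons_cons] at hl
  exact ⟨⟨he', hl, hs.2⟩, h1, hs.1, h2⟩

lemma isEBP_cons {x y : ℕ} {t : List ℕ} (h : IsEBP (y :: t)) (h1 : y < x)
    (h3 : ¬(Odd x ∧ Odd y)) : IsEBP (x :: y :: t) := by
  obtain ⟨-, hc, hp, hl, ho⟩ := h
  refine ⟨by simp, List.isChain_cons_cons.2 ⟨h1, hc⟩, ?_, by rwa [List.getLast?_cons_cons],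
    List.isChain_cons_cons.2 ⟨h3, ho⟩⟩
  intro z hz
  rcases List.mem_cons.1 hz with rfl | hz
  · have := hp y List.mem_cons_self; omega
  · exact hp z hz

lemma isBasal_cons_s4 {x y : ℕ} {t : List ℕ} (h : IsBasal (y :: t)) (h1 : y < x)
    (h2 : x - y ≤ 2) (h3 : ¬(Odd x ∧ Odd y)) : IsBasal (x :: y :: t) :=
  ⟨isEBP_cons h.1 h1 h3, by rw [List.getLast?_cons_cons]; exact h.2.1,
   List.isChain_cons_cons.2 ⟨h2, h.2.2⟩⟩

lemma key_arith {a b cA cB : ℕ} (hc : cA = cB + if a % 2 = 0 then 1 else 0)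
    (hab : b < a) (hno : ¬(a % 2 = 1 ∧ b % 2 = 1)) :
    2 * cB + b % 2 < 2 * cA + a % 2 ∧ (2 * cA + a % 2) - (2 * cB + b % 2) ≤ 2 ∧
      (2 * cA + a % 2) + b ≤ (2 * cB + b % 2) + a := by
  by_cases h0 : a % 2 = 0 <;> simp [h0] at hc <;> omega

lemma master : ∀ l : List ℕ, IsEBP l →
    IsBasal (bas l) ∧ List.Forall₂ (fun x y => x ≤ y ∧ x % 2 = y % 2) (bas l) l
  | [], h => absurd rfl h.1
  | [a], h => by
    have ha : Even a := h.2.2.2.1 a (by simp)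
    have hpos : 0 < a := h.2.2.1 a (by simp)
    have ha2 : a % 2 = 0 := Nat.even_iff.1 ha
    have hb : bas [a] = [2] := by simp [bas_cons, cntE_cons, ha2, cntE, bas]
    rw [hb]
    refine ⟨⟨⟨by simp, List.isChain_singleton _, by simp, by simp, List.isChain_singleton _⟩,
      by simp, List.isChain_singleton _⟩, List.forall₂_cons.2 ⟨⟨by omega, by omega⟩, List.Forall₂.nil⟩⟩
  | a :: b :: t, h => by
    obtain ⟨ht, hab, hno⟩ := isEBP_tail h
    obtain ⟨hbas, hf⟩ := master (b :: t) ht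
    rw [bas_cons] at hf hbas ⊢
    rw [bas_cons]
    have hB := (List.forall₂_cons.1 hf).1
    have hno' : ¬(a % 2 = 1 ∧ b % 2 = 1) := by simpa [Nat.odd_iff] using hno
    have hk := key_arith (cntE_cons a (b :: t)) hab hno'
    refine ⟨isBasal_cons_s4 hbas hk.1 hk.2.1 ?_, List.forall₂_cons.2 ⟨⟨by omega, by omega⟩, hf⟩⟩
    simp only [Nat.odd_iff]
    omega

lemma p_chain : ∀ l : List ℕ, IsEBP l →
    (List.zipWith (· - ·) l (bas l)).Chain' (fun a b => b ≤ a)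
  | [], _ => by simp [List.Chain']
  | [a], _ => by simp [bas_cons, bas, List.Chain']
  | a :: b :: t, h => by
    obtain ⟨ht, hab, hno⟩ := isEBP_tail h
    have ih := p_chain (b :: t) ht
    have hf := (master (b :: t) ht).2
    rw [bas_cons] at hf ih
    have hB := (List.forall₂_cons.1 hf).1
    have hno' : ¬(a % 2 = 1 ∧ b % 2 = 1) := by simpa [Nat.odd_iff] using hno
    have hk := key_arith (cntE_cons a (b :: t)) hab hno'
    rw [bas_cons, bas_cons]
    simp only [List.zipWith_cons_cons] at ih ⊢
    exact List.isChain_cons_cons.2 ⟨by omega, ih⟩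

lemma sub_even : ∀ {b l : List ℕ},
    List.Forall₂ (fun x y => x ≤ y ∧ x % 2 = y % 2) b l →
    (∀ x ∈ List.zipWith (· - ·) l b, Even x) ∧
      List.zipWith (· + ·) b (List.zipWith (· - ·) l b) = l := by
  intro b l h
  induction h with
  | nil => simp
  | @cons x y b l hxy _ ih =>
    simp only [List.zipWith_cons_cons]
    refine ⟨?_, by rw [ih.2]; congr 1; omega⟩
    intro z hz
    rcases List.mem_cons.1 hz with rfl | hz
    · rw [Nat.even_iff]; omega
    · exact ih.1 z hz

lemma cntE_congr : ∀ {l₁ l₂ : List ℕ},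
    List.Forall₂ (fun x y => x % 2 = y % 2) l₁ l₂ → cntE l₁ = cntE l₂ := by
  intro l₁ l₂ h
  induction h with
  | nil => rfl
  | @cons x y _ _ hxy _ ih => rw [cntE_cons, cntE_cons, ih, hxy]

lemma bas_congr : ∀ {l₁ l₂ : List ℕ},
    List.Forall₂ (fun x y => x % 2 = y % 2) l₁ l₂ → bas l₁ = bas l₂ := by
  intro l₁ l₂ h
  induction h with
  | nil => rfl
  | @cons x y l₁ l₂ hxy h ih =>
    rw [bas_cons, bas_cons, ih, hxy, cntE_congr (List.Forall₂.cons hxy h)]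

lemma bas_fixed : ∀ l : List ℕ, IsBasal l → bas l = l
  | [], h => absurd rfl h.1.1
  | [a], h => by
    have : a = 2 := by simpa using h.2.1
    subst this
    simp [bas_cons, cntE_cons, cntE, bas]
  | a :: b :: t, h => by
    obtain ⟨hb, h1, h2, h3⟩ := isBasal_tail h
    have ih := bas_fixed (b :: t) hb
    rw [bas_cons, ih]
    rw [bas_cons] at ih
    have hB : 2 * cntE (b :: t) + b % 2 = b := by
      have := congrArg (List.headI) ih
      simpa using this
    have hno' : ¬(a % 2 = 1 ∧ b % 2 = 1) := by simpa [Nat.odd_iff] using h3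
    rw [cntE_cons]
    congr 1
    by_cases h0 : a % 2 = 0 <;> simp [h0] <;> omega

lemma p_eq : ∀ (b p : List ℕ), p.length = b.length →
    List.zipWith (· - ·) (List.zipWith (· + ·) b p) b = p
  | [], [], _ => rfl
  | [], q :: p, h => by simp at h
  | x :: b, [], h => by simp at h
  | x :: b, q :: p, h => by
    simp only [List.zipWith_cons_cons, p_eq b p (by simpa using h)]
    congr 1
    omega

lemma zip_parity : ∀ (b p : List ℕ), p.length = b.length → (∀ x ∈ p, Even x) →
    List.Forall₂ (fun x y => x % 2 = y % 2) b (List.zipWith (· + ·) b p)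
  | [], [], _, _ => List.Forall₂.nil
  | [], q :: p, h, _ => by simp at h
  | x :: b, [], h, _ => by simp at h
  | x :: b, q :: p, h, hev => by
    have hq : Even q := hev q (by simp)
    rw [Nat.even_iff] at hq
    simp only [List.zipWith_cons_cons]
    exact List.Forall₂.cons (by omega)
      (zip_parity b p (by simpa using h) (fun z hz => hev z (List.mem_cons_of_mem _ hz)))

lemma converse : ∀ (b p : List ℕ), IsBasal b → p.length = b.length →
    p.Chain' (fun a b => b ≤ a) → (∀ x ∈ p, Even x) →
    IsEBP (List.zipWith (· + ·) b p)
  | [], _, h, _, _, _ => absurd rfl h.1.1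
  | [x], p, h, hl, hch, hev => by
    obtain ⟨q, rfl⟩ : ∃ q, p = [q] := by
      match p, hl with
      | [q], _ => exact ⟨q, rfl⟩
    have hx : x = 2 := by simpa using h.2.1
    subst hx
    have hq : Even q := hev q (by simp)
    rw [Nat.even_iff] at hq
    refine ⟨by simp, by simp [List.Chain'], by intro x hx; simp at hx; omega, ?_, by simp [List.Chain']⟩
    intro m hm
    simp at hm
    rw [← hm, Nat.even_iff]
    omega
  | x :: y :: b, p, h, hl, hch, hev => by
    obtain ⟨q, r, ps, rfl⟩ : ∃ q r ps, p = q :: r :: ps := by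
      match p, hl with
      | q :: r :: ps, _ => exact ⟨q, r, ps, rfl⟩
    obtain ⟨hb, hyx, hd2, hno⟩ := isBasal_tail h
    have ih := converse (y :: b) (r :: ps) hb (by simpa using hl)
      (List.isChain_cons_cons.1 hch).2 (fun z hz => hev z (List.mem_cons_of_mem _ hz))
    simp only [List.zipWith_cons_cons] at ih ⊢
    have hq : Even q := hev q (by simp)
    have hr : Even r := hev r (by simp [List.mem_cons])
    rw [Nat.even_iff] at hq hr
    have hqr : r ≤ q := (List.isChain_cons_cons.1 hch).1
    refine isEBP_cons ih (by omega) ?_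
    simp only [Nat.odd_iff] at hno ⊢
    omega


/-- Every Euclidean billiard partition `(m₁ > ⋯ > m_d)` is uniquely the sum of a
basal billiard partition `(b₁ > ⋯ > b_d)` with `d` parts and a weakly decreasing
sequence `p₁ ≥ p₂ ≥ ⋯ ≥ p_d ≥ 0` of even nonnegative integers (`m_i = b_i + p_i`);
conversely, any such sum is an Euclidean billiard partition with `d` parts. -/
theorem ebp_unique_basal_decomposition :
    (∀ l : List ℕ, IsEBP l →
      ∃! bp : List ℕ × List ℕ,
        IsBasal bp.1 ∧ bp.1.length = l.length ∧ bp.2.length = l.length ∧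
          bp.2.Chain' (fun a b => b ≤ a) ∧ (∀ x ∈ bp.2, Even x) ∧
          l = List.zipWith (· + ·) bp.1 bp.2) ∧
    (∀ b p : List ℕ, IsBasal b → p.length = b.length →
      p.Chain' (fun a b => b ≤ a) → (∀ x ∈ p, Even x) →
      IsEBP (List.zipWith (· + ·) b p)) := by
  constructor
  · intro l hl
    obtain ⟨hbas, hf⟩ := master l hl
    obtain ⟨hev, hrec⟩ := sub_even hf
    refine ⟨(bas l, List.zipWith (· - ·) l (bas l)),
      ⟨hbas, bas_length l, ?_, p_chain l hl, hev, hrec.symm⟩, ?_⟩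
    · rw [List.length_zipWith, bas_length]; omega
    · rintro ⟨b, p⟩ ⟨hb, hlen1, hlen2, hpch, hpev, hzip⟩
      have hpl : p.length = b.length := by rw [hlen2, hlen1]
      have hbl : b = bas l := by
        rw [← bas_fixed b hb, hzip]
        exact bas_congr (zip_parity b p hpl hpev)
      have hpeq : p = List.zipWith (· - ·) l (bas l) := by
        rw [← hbl, hzip]
        exact (p_eq b p hpl).symm
      simp [hbl, hpeq]
  · exact converse
end

section
/- Let k ≥ 1, let c_1, …, c_k be positive integers with c_r ≡ r (mod k), and let d_1, …, d_k be nonnegative integers. Suppose (b_1 < b_2 < ⋯ < b_j) is a type-B basis element, i.e.: b_1 = c_r where r ∈ {1,…,k} is the residue of b_1 modulo k; for every i, b_i ≥ c_{r_i} where r_i is the residue of b_i; and for every i ≥ 2, max{d_{r_i}, 1} ≤ b_i − b_{i−1} < d_{r_i} + k. Let 0 ≤ p_1 ≤ p_2 ≤ ⋯ ≤ p_j be integers each divisible by k. Then the sequence (b_1 + p_1, …, b_j + p_j) is strictly increasing, each part b_i + p_i is ≥ c_{r_i} where r_i is its residue modulo k, and for every i ≥ 2 the difference (b_i + p_i) −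 (b_{i−1} + p_{i−1}) is ≥ max{1, d_{r_i}} where r_i is the residue of b_i + p_i modulo k; i.e., the resulting partition belongs to the type-B partition class determined by (c_r) and (d_r). -/
/-- The residue of `n` modulo `k`, taken in `{1, 2, …, k}` (with `k`
representing the residue `0`). -/
def res (k n : ℕ) : ℕ := if n % k = 0 then k else n % k

/-- A type-B basis element for the data `(c_r)`, `(d_r)`: a strictly increasing
sequence `b 0 < b 1 < ⋯ < b (j-1)` of positive integers such that `b 0 = c r`
where `r` is the residue of `b 0` modulo `k`; every `b i` is at least `c` of its
residue; and each difference `b (i+1) - b i` lies in `[max (d r) 1, d r + k)`,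
where `r` is the residue of `b (i+1)`. -/
def TypeBBasis (k j : ℕ) (c d b : ℕ → ℕ) : Prop :=
  (∀ i, i + 1 < j → b i < b (i + 1)) ∧
  (∀ i, i < j → 0 < b i) ∧
  (0 < j → b 0 = c (res k (b 0))) ∧
  (∀ i, i < j → c (res k (b i)) ≤ b i) ∧
  (∀ i, i + 1 < j →
    max (d (res k (b (i + 1)))) 1 ≤ b (i + 1) - b i ∧
      b (i + 1) - b i < d (res k (b (i + 1))) + k)

/-- Adding a weakly increasing sequence of nonnegative multiples of `k` to a
type-B basis element yields a member of the type-B partition class: the result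
is strictly increasing, each part is at least `c` of its residue, and adjacent
differences are at least `max 1 (d r)` where `r` is the residue of the larger
part. -/
theorem typeB_basis_add_multiples_mem_class (k j : ℕ) (hk : 1 ≤ k)
    (c d : ℕ → ℕ)
    (hc : ∀ r, 1 ≤ r → r ≤ k → 0 < c r ∧ c r % k = r % k)
    (b p : ℕ → ℕ)
    (hb : TypeBBasis k j c d b)
    (hpdvd : ∀ i, i < j → k ∣ p i)
    (hpmono : ∀ i, i + 1 < j → p i ≤ p (i + 1)) :
    (∀ i, i < j → 0 < b i + p i) ∧
    (∀ i, i + 1 < j → b i + p i < b (i + 1) + p (i + 1)) ∧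
    (∀ i, i < j → c (res k (b i + p i)) ≤ b i + p i) ∧
    (∀ i, i + 1 < j →
      max 1 (d (res k (b (i + 1) + p (i + 1)))) ≤
        (b (i + 1) + p (i + 1)) - (b i + p i)) := by
  obtain ⟨hmono, hpos, -, hge, hdiff⟩ := hb
  have hres : ∀ i, i < j → res k (b i + p i) = res k (b i) := by
    intro i hi
    obtain ⟨m, hm⟩ := hpdvd i hi
    simp [res, hm, Nat.add_mul_mod_self_left]
  refine ⟨?_, ?_, ?_, ?_⟩
  · intro i hi
    exact Nat.lt_of_lt_of_le (hpos i hi) (Nat.le_add_right _ _)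
  · intro i hi
    exact Nat.add_lt_add_of_lt_of_le (hmono i hi) (hpmono i hi)
  · intro i hi
    rw [hres i hi]
    exact le_trans (hge i hi) (Nat.le_add_right _ _)
  · intro i hi
    rw [hres (i+1) hi]
    have h1 := (hdiff i hi).1
    have h2 : b i ≤ b (i+1) := (hmono i hi).le
    have h3 := hpmono i hi
    rw [max_comm] at h1
    calc max 1 (d (res k (b (i + 1)))) ≤ b (i+1) - b i := h1
      _ ≤ (b (i + 1) + p (i + 1)) - (b i + p i) := by omega
end

section
/- Let k ≥ 1, let c_1, …, c_k be positive integers with c_r ≡ r (mod k), and let d_1, …, d_k be nonnegative integers. Suppose (b_1 < ⋯ < b_j) and (b'_1 < ⋯ < b'_j) are type-B basis elements, and 0 ≤ p_1 ≤ ⋯ ≤ p_j and 0 ≤ p'_1 ≤ ⋯ ≤ p'_j are integers divisible by k, such that b_i + p_i = b'_i + p'_i for all 1 ≤ i ≤ j. Then b_i = b'_i and p_i = p'_i for all i. In other words, the representation of a partition as a type-B basis element plus a weakly increasing sequence of nonnegative multiples of k is unique. -/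
lemma typeB_key_diff_eq (k D x y : ℕ) (hx1 : max D 1 ≤ x) (hx2 : x < D + k)
    (hy1 : max D 1 ≤ y) (hy2 : y < D + k) (hmod : x % k = y % k) : x = y := by
  rcases le_total x y with h | h
  · have hd : k ∣ y - x := (Nat.modEq_iff_dvd' h).mp hmod
    have := Nat.eq_zero_of_dvd_of_lt hd ?_ <;> omega
  · have hd : k ∣ x - y := (Nat.modEq_iff_dvd' h).mp hmod.symm
    have := Nat.eq_zero_of_dvd_of_lt hd ?_ <;> omega

/-- Uniqueness of the representation of a partition as a type-B basis element
plus a weakly increasing sequence of nonnegative multiples of `k`. -/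
theorem typeB_decomposition_unique (k j : ℕ) (hk : 1 ≤ k)
    (c d : ℕ → ℕ)
    (hc : ∀ r, 1 ≤ r → r ≤ k → 0 < c r ∧ c r % k = r % k)
    (b b' p p' : ℕ → ℕ)
    (hb : TypeBBasis k j c d b) (hb' : TypeBBasis k j c d b')
    (hp : ∀ i, i < j → k ∣ p i) (hp' : ∀ i, i < j → k ∣ p' i)
    (hpm : ∀ i, i + 1 < j → p i ≤ p (i + 1))
    (hpm' : ∀ i, i + 1 < j → p' i ≤ p' (i + 1))
    (heq : ∀ i, i < j → b i + p i = b' i + p' i) :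
    ∀ i, i < j → b i = b' i ∧ p i = p' i := by
  obtain ⟨hmono, hpos, hfirst, hcb, hdiff⟩ := hb
  obtain ⟨hmono', hpos', hfirst', hcb', hdiff'⟩ := hb'
  have hmod : ∀ i, i < j → b i % k = b' i % k := by
    intro i hi
    obtain ⟨t, ht⟩ := hp i hi
    obtain ⟨t', ht'⟩ := hp' i hi
    calc b i % k = (b i + k * t) % k := by rw [Nat.add_mul_mod_self_left]
      _ = (b' i + k * t') % k := by rw [← ht, ← ht', heq i hi]
      _ = b' i % k := by rw [Nat.add_mul_mod_self_left]
  have hres : ∀ i, i < j → res k (b i) = res k (b' i) := by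
    intro i hi; unfold res; rw [hmod i hi]
  intro i
  induction i with
  | zero =>
    intro hj
    have h0 : b 0 = b' 0 := by rw [hfirst hj, hfirst' hj, hres 0 hj]
    exact ⟨h0, by have := heq 0 hj; omega⟩
  | succ i ih =>
    intro hj
    have hi : i < j := by omega
    obtain ⟨hbi, hpi⟩ := ih hi
    have hd1 := hdiff i hj
    have hd2 := hdiff' i hj
    rw [← hres (i+1) hj] at hd2
    have hlt : b i < b (i+1) := hmono i hj
    have hlt' : b' i < b' (i+1) := hmono' i hj
    have hmd : (b (i+1) - b i) % k = (b' (i+1) - b' i) % k := by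
      have h1 := hmod (i+1) hj
      have e1 : b (i+1) = b' i + (b (i+1) - b i) := by omega
      have e2 : b' (i+1) = b' i + (b' (i+1) - b' i) := by omega
      rw [e1, e2] at h1
      exact Nat.ModEq.add_left_cancel' _ h1
    have hδ : b (i+1) - b i = b' (i+1) - b' i :=
      typeB_key_diff_eq k (d (res k (b (i+1)))) _ _ hd1.1 hd1.2 hd2.1 hd2.2 hmd
    have hbeq : b (i+1) = b' (i+1) := by omega
    exact ⟨hbeq, by have := heq (i+1) hj; omega⟩
end

section
/- Fix an integer k ≥ 1 and a subset O ⊆ {1, …, k} with |O| = ℓ (the odd-like residues). For d ≥ 1 let f_d be the number of strictly increasing sequences b_1 < b_2 < ⋯ < b_d of positive integers such that b_1 ≤ k, and for every 2 ≤ i ≤ d, letting r ∈ {1,…,k} be the residue of b_i modulo k: b_i − b_{i−1} ∈ {1, …, k−1} if r ∈ O, and b_i − b_{i−1} ∈ {1, …, k} if r ∉ O. Then f_1 = k, f_2 = k² − ℓ, and for all d ≥ 1 the Lucas-type recurrence f_{d+2} = (k−1)·f_{d+1} + (k−ℓ)·f_d holds. -/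
namespace TypeBAux

def succs (k : ℕ) (O : Finset ℕ) (a : ℕ) : Finset ℕ :=
  (Finset.Icc (a+1) (a+k)).filter (fun b => res k b ∈ O → b ≤ a + (k-1))

def V (k : ℕ) (O : Finset ℕ) : ℕ → Finset (List ℕ)
  | 0 => (Finset.Icc 1 k).image (fun a => [a])
  | (n+1) => (V k O n).biUnion
      (fun l => (succs k O (l.getLastD 0)).image (fun b => l ++ [b]))

variable {k : ℕ} {O : Finset ℕ}

lemma res_mem_Icc (hk : 1 ≤ k) (b : ℕ) : res k b ∈ Finset.Icc 1 k := by
  have h := Nat.mod_lt b hk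
  simp only [res, Finset.mem_Icc]
  split <;> omega

lemma res_eq_mod (hk : 1 ≤ k) {b b' : ℕ} (h : res k b = res k b') : b % k = b' % k := by
  have h1 : b % k < k := Nat.mod_lt b hk
  have h2 : b' % k < k := Nat.mod_lt b' hk
  simp only [res] at h
  split_ifs at h <;> omega

lemma res_self (hk : 1 ≤ k) {a : ℕ} (h1 : 1 ≤ a) (h2 : a ≤ k) : res k a = a := by
  rcases eq_or_lt_of_le h2 with rfl | h
  · simp [res]
  · simp only [res, Nat.mod_eq_of_lt h]
    split <;> omega

lemma res_add_k (a : ℕ) : res k (a + k) = res k a := by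
  simp [res, Nat.add_mod_right]

lemma injOn_res (hk : 1 ≤ k) (a : ℕ) :
    Set.InjOn (res k) ↑(Finset.Icc (a+1) (a+k)) := by
  intro b hb b' hb' h
  simp only [Finset.coe_Icc, Set.mem_Icc] at hb hb'
  have hm : b % k = b' % k := res_eq_mod hk h
  rcases le_total b b' with hle | hle
  · have hd : k ∣ b' - b := (Nat.modEq_iff_dvd' hle).mp hm
    have h0 : b' - b = 0 := Nat.eq_zero_of_dvd_of_lt hd (by omega)
    omega
  · have hd : k ∣ b - b' := (Nat.modEq_iff_dvd' hle).mp hm.symm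
    have h0 : b - b' = 0 := Nat.eq_zero_of_dvd_of_lt hd (by omega)
    omega

lemma image_res (hk : 1 ≤ k) (a : ℕ) :
    (Finset.Icc (a+1) (a+k)).image (res k) = Finset.Icc 1 k := by
  apply Finset.eq_of_subset_of_card_le
  · intro r hr
    obtain ⟨b, _, rfl⟩ := Finset.mem_image.mp hr
    exact res_mem_Icc hk b
  · rw [Finset.card_image_of_injOn (injOn_res hk a)]
    simp [Nat.card_Icc]

lemma card_filter_res (hk : 1 ≤ k) (hO : O ⊆ Finset.Icc 1 k) (a : ℕ) :
    ((Finset.Icc (a+1) (a+k)).filter (fun b => res k b ∈ O)).card = O.card := by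
  have hinj : Set.InjOn (res k) ↑((Finset.Icc (a+1) (a+k)).filter (fun b => res k b ∈ O)) :=
    (injOn_res hk a).mono (Finset.coe_subset.mpr (Finset.filter_subset _ _))
  have h2 : (((Finset.Icc (a+1) (a+k)).filter (fun b => res k b ∈ O)).image (res k))
      = ((Finset.Icc (a+1) (a+k)).image (res k)).filter (fun r => r ∈ O) :=
    (Finset.filter_image (p := fun r => r ∈ O) (f := res k) (s := Finset.Icc (a+1) (a+k))).symm
  have h3 : ((Finset.Icc (a+1) (a+k)).image (res k)).filter (fun r => r ∈ O) = O := by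
    rw [image_res hk a, Finset.filter_mem_eq_inter, Finset.inter_eq_right.mpr hO]
  calc ((Finset.Icc (a+1) (a+k)).filter (fun b => res k b ∈ O)).card
      = (((Finset.Icc (a+1) (a+k)).filter (fun b => res k b ∈ O)).image (res k)).card :=
        (Finset.card_image_of_injOn hinj).symm
    _ = O.card := by rw [h2, h3]

lemma filter_bad (hk : 1 ≤ k) (a : ℕ) :
    (Finset.Icc (a+1) (a+k)).filter (fun b => res k b ∈ O ∧ a + (k-1) < b)
      = if res k a ∈ O then {a+k} else ∅ := by
  ext b
  simp only [Finset.mem_filter, Finset.mem_Icc]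
  by_cases hO' : res k a ∈ O
  · simp only [hO', if_true, Finset.mem_singleton]
    constructor
    · rintro ⟨⟨h1, h2⟩, _, h4⟩; omega
    · rintro rfl
      exact ⟨⟨by omega, le_rfl⟩, by rwa [res_add_k], by omega⟩
  · simp only [hO', if_false, Finset.notMem_empty, iff_false]
    rintro ⟨⟨h1, h2⟩, h3, h4⟩
    have hb : b = a + k := by omega
    subst hb
    rw [res_add_k] at h3
    exact hO' h3

lemma card_succs (hk : 1 ≤ k) (a : ℕ) :
    (succs k O a).card = k - (if res k a ∈ O then 1 else 0) := by
  have hsplit := Finset.card_filter_add_card_filter_not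
    (s := Finset.Icc (a+1) (a+k)) (p := fun b => res k b ∈ O → b ≤ a + (k-1))
  have hneg : (Finset.Icc (a+1) (a+k)).filter (fun b => ¬(res k b ∈ O → b ≤ a + (k-1)))
      = (Finset.Icc (a+1) (a+k)).filter (fun b => res k b ∈ O ∧ a + (k-1) < b) := by
    apply Finset.filter_congr
    intro b _
    constructor
    · intro h
      push_neg at h
      exact ⟨h.1, by omega⟩
    · intro h hcon
      have := hcon h.1; omega
  rw [hneg, filter_bad hk a] at hsplit
  have hIcc : (Finset.Icc (a+1) (a+k)).card = k := by simp [Nat.card_Icc]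
  rw [hIcc] at hsplit
  unfold succs
  split_ifs at hsplit ⊢ <;> simp_all <;> omega

lemma card_succs_O (hk : 1 ≤ k) (hO : O ⊆ Finset.Icc 1 k) (a : ℕ) :
    ((succs k O a).filter (fun b => res k b ∈ O)).card
      = O.card - (if res k a ∈ O then 1 else 0) := by
  have h1 : (succs k O a).filter (fun b => res k b ∈ O)
      = ((Finset.Icc (a+1) (a+k)).filter (fun b => res k b ∈ O)).filter
          (fun b => b ≤ a + (k-1)) := by
    ext b
    simp only [succs, Finset.mem_filter, Finset.mem_Icc]
    tauto
  have hsplit := Finset.card_filter_add_card_filter_not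
    (s := (Finset.Icc (a+1) (a+k)).filter (fun b => res k b ∈ O))
    (p := fun b => b ≤ a + (k-1))
  have hneg : ((Finset.Icc (a+1) (a+k)).filter (fun b => res k b ∈ O)).filter
        (fun b => ¬ b ≤ a + (k-1))
      = (Finset.Icc (a+1) (a+k)).filter (fun b => res k b ∈ O ∧ a + (k-1) < b) := by
    rw [Finset.filter_filter]
    apply Finset.filter_congr
    intro b _
    constructor
    · rintro ⟨hp, hq⟩; exact ⟨hp, by omega⟩
    · rintro ⟨hp, hq⟩; exact ⟨hp, by omega⟩
  rw [hneg, filter_bad hk a, card_filter_res hk hO a] at hsplit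
  rw [h1]
  have hcard1 : res k a ∈ O → 1 ≤ O.card := fun h => Finset.card_pos.mpr ⟨_, h⟩
  split_ifs at hsplit ⊢ with h <;> simp_all <;> omega

lemma mem_succs (hk : 1 ≤ k) {a b : ℕ} :
    b ∈ succs k O a ↔
      (if res k b ∈ O then 1 ≤ b - a ∧ b - a ≤ k - 1
       else 1 ≤ b - a ∧ b - a ≤ k) := by
  simp only [succs, Finset.mem_filter, Finset.mem_Icc]
  by_cases h : res k b ∈ O <;> simp only [h, if_true, if_false, true_implies, false_implies, and_true] <;> omega

lemma getLast?_eq_getLastD {l : List ℕ} (h : l ≠ []) :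
    l.getLast? = some (l.getLastD 0) := by
  rw [List.getLastD_eq_getLast?]
  cases hc : l.getLast? with
  | none => exact absurd (List.getLast?_eq_none_iff.mp hc) h
  | some x => rfl

lemma mem_V (hk : 1 ≤ k) :
    ∀ (n : ℕ) (l : List ℕ), l ∈ V k O n ↔
      (l.length = n + 1 ∧ (∀ x ∈ l, 0 < x) ∧ (∀ x ∈ l.head?, x ≤ k) ∧
        l.Chain' (fun a b =>
          if res k b ∈ O then 1 ≤ b - a ∧ b - a ≤ k - 1
          else 1 ≤ b - a ∧ b - a ≤ k)) := by
  intro n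
  induction n with
  | zero =>
    intro l
    simp only [V, Finset.mem_image, Finset.mem_Icc]
    constructor
    · rintro ⟨a, ⟨h1, h2⟩, rfl⟩
      refine ⟨rfl, ?_, ?_, ?_⟩
      · intro x hx; simp at hx; omega
      · intro x hx; simp at hx; omega
      · exact List.isChain_singleton a
    · rintro ⟨hlen, hpos, hhead, -⟩
      match l, hlen with
      | [a], _ =>
        refine ⟨a, ⟨hpos a (by simp), ?_⟩, rfl⟩
        have := hhead a (by simp)
        exact this
  | succ n ih =>
    intro l
    simp only [V, Finset.mem_biUnion, Finset.mem_image]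
    constructor
    · rintro ⟨l', hl', b, hb, rfl⟩
      obtain ⟨hlen, hpos, hhead, hchain⟩ := (ih l').mp hl'
      have hne : l' ≠ [] := by intro h; subst h; simp at hlen
      have hb' := (mem_succs hk).mp hb
      have hbge : l'.getLastD 0 + 1 ≤ b := by
        split_ifs at hb' <;> omega
      obtain ⟨c, t, rfl⟩ := List.exists_cons_of_ne_nil hne
      refine ⟨?_, ?_, ?_, ?_⟩
      · simp at hlen ⊢; omega
      · intro x hx
        rcases List.mem_append.mp hx with h | h
        · exact hpos x h
        · simp at h; omega
      · intro x hx
        simp only [List.cons_append, List.head?_cons, Option.mem_some_iff] at hx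
        subst hx
        exact hhead _ rfl
      · apply List.isChain_append.mpr
        refine ⟨hchain, List.isChain_singleton b, ?_⟩
        intro x hx y hy
        rw [getLast?_eq_getLastD hne, Option.mem_some_iff] at hx
        simp only [List.head?_cons, Option.mem_some_iff] at hy
        subst hx; subst hy
        exact hb'
    · rintro ⟨hlen, hpos, hhead, hchain⟩
      have hne : l ≠ [] := by intro h; subst h; simp at hlen
      have hdecomp : l.dropLast ++ [l.getLast hne] = l := List.dropLast_append_getLast hne
      have hne' : l.dropLast ≠ [] := by
        intro h
        have := List.length_dropLast (xs := l)
        rw [h] at this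
        simp at this
        omega
      refine ⟨l.dropLast, ?_, l.getLast hne, ?_, hdecomp⟩
      · rw [ih]
        refine ⟨?_, ?_, ?_, ?_⟩
        · have := List.length_dropLast (xs := l); omega
        · intro x hx; exact hpos x (List.dropLast_subset l hx)
        · intro x hx
          apply hhead x
          rw [← hdecomp]
          obtain ⟨c, t, hct⟩ := List.exists_cons_of_ne_nil hne'
          rw [hct] at hx ⊢
          simpa using hx
        · rw [← hdecomp] at hchain
          exact (List.isChain_append.mp hchain).1
      · rw [mem_succs hk]
        rw [← hdecomp] at hchain
        have hlink := (List.isChain_append.mp hchain).2.2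
        exact hlink _ (by rw [getLast?_eq_getLastD hne']; rfl) _ rfl

lemma singleton_injective' : Function.Injective (fun a : ℕ => [a]) := by
  intro a b h; simpa using h

lemma card_V_zero (hk : 1 ≤ k) : (V k O 0).card = k := by
  show ((Finset.Icc 1 k).image (fun a => [a])).card = k
  rw [Finset.card_image_of_injective _ singleton_injective']
  simp [Nat.card_Icc]

lemma card_V_zero_filter (hk : 1 ≤ k) (hO : O ⊆ Finset.Icc 1 k) :
    ((V k O 0).filter (fun l => res k (l.getLastD 0) ∈ O)).card = O.card := by
  show (((Finset.Icc 1 k).image (fun a => [a])).filter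
      (fun l => res k (l.getLastD 0) ∈ O)).card = O.card
  rw [Finset.filter_image]
  rw [Finset.card_image_of_injective _ singleton_injective']
  have h : (Finset.Icc 1 k).filter (fun a => res k ([a].getLastD 0) ∈ O) = O := by
    ext r
    have hg : ([r] : List ℕ).getLastD 0 = r := by
      simpa using List.getLastD_concat 0 r []
    simp only [Finset.mem_filter, Finset.mem_Icc, hg]
    constructor
    · rintro ⟨⟨h1, h2⟩, h3⟩
      rwa [res_self hk h1 h2] at h3
    · intro h
      have hm := hO h
      simp only [Finset.mem_Icc] at hm
      exact ⟨hm, by rwa [res_self hk hm.1 hm.2]⟩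
  rw [h]

lemma append_injective (l : List ℕ) : Function.Injective (fun b : ℕ => l ++ [b]) := by
  intro a b h
  simpa using h

lemma disjoint_images (hk : 1 ≤ k) {n : ℕ} (t : List ℕ → Finset ℕ) :
    ∀ l ∈ V k O n, ∀ l' ∈ V k O n, l ≠ l' →
      Disjoint ((t l).image (fun b => l ++ [b])) ((t l').image (fun b => l' ++ [b])) := by
  intro l hl l' hl' hne
  rw [Finset.disjoint_left]
  intro x hx hx'
  obtain ⟨b, _, rfl⟩ := Finset.mem_image.mp hx
  obtain ⟨b', _, heq⟩ := Finset.mem_image.mp hx'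
  exact hne ((List.append_inj' heq rfl).1.symm)

lemma card_V_succ (hk : 1 ≤ k) (hO : O ⊆ Finset.Icc 1 k) (n : ℕ) :
    (V k O (n+1)).card
        + ((V k O n).filter (fun l => res k (l.getLastD 0) ∈ O)).card
      = k * (V k O n).card := by
  have h1 : (V k O (n+1)).card
      = ∑ l ∈ V k O n, (k - (if res k (l.getLastD 0) ∈ O then 1 else 0)) := by
    show ((V k O n).biUnion _).card = _
    rw [Finset.card_biUnion (disjoint_images hk _)]
    apply Finset.sum_congr rfl
    intro l _
    rw [Finset.card_image_of_injective _ (append_injective l), card_succs hk]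
  rw [h1, Finset.card_filter]
  rw [← Finset.sum_add_distrib]
  have h2 : ∀ l ∈ V k O n,
      (k - (if res k (l.getLastD 0) ∈ O then 1 else 0))
        + (if res k (l.getLastD 0) ∈ O then 1 else 0) = k := by
    intro l _
    split_ifs <;> omega
  rw [Finset.sum_congr rfl h2, Finset.sum_const, smul_eq_mul, mul_comm]

lemma card_V_succ_filter (hk : 1 ≤ k) (hO : O ⊆ Finset.Icc 1 k) (n : ℕ) :
    ((V k O (n+1)).filter (fun l => res k (l.getLastD 0) ∈ O)).card
        + ((V k O n).filter (fun l => res k (l.getLastD 0) ∈ O)).card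
      = O.card * (V k O n).card := by
  have hEq : (V k O (n+1)).filter (fun l => res k (l.getLastD 0) ∈ O)
      = (V k O n).biUnion (fun l =>
          ((succs k O (l.getLastD 0)).filter (fun b => res k b ∈ O)).image
            (fun b => l ++ [b])) := by
    ext x
    simp only [V, Finset.mem_filter, Finset.mem_biUnion, Finset.mem_image]
    constructor
    · rintro ⟨⟨l, hl, b, hb, rfl⟩, hQ⟩
      rw [List.getLastD_concat] at hQ
      exact ⟨l, hl, b, ⟨hb, hQ⟩, rfl⟩
    · rintro ⟨l, hl, b, hb, rfl⟩
      exact ⟨⟨l, hl, b, hb.1, rfl⟩, by rw [List.getLastD_concat]; exact hb.2⟩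
  have h1 : ((V k O (n+1)).filter (fun l => res k (l.getLastD 0) ∈ O)).card
      = ∑ l ∈ V k O n, (O.card - (if res k (l.getLastD 0) ∈ O then 1 else 0)) := by
    rw [hEq, Finset.card_biUnion (disjoint_images hk _)]
    apply Finset.sum_congr rfl
    intro l _
    rw [Finset.card_image_of_injective _ (append_injective l), card_succs_O hk hO]
  rw [h1, Finset.card_filter]
  rw [← Finset.sum_add_distrib]
  have h2 : ∀ l ∈ V k O n,
      (O.card - (if res k (l.getLastD 0) ∈ O then 1 else 0))
        + (if res k (l.getLastD 0) ∈ O then 1 else 0) = O.card := by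
    intro l _
    split_ifs with h
    · have : 1 ≤ O.card := Finset.card_pos.mpr ⟨_, h⟩
      omega
    · omega
  rw [Finset.sum_congr rfl h2, Finset.sum_const, smul_eq_mul, mul_comm]

end TypeBAux

/-- Fix `k ≥ 1` and a set `O ⊆ {1, …, k}` of odd-like residues with `|O| = ℓ`.
If `f d` is the number of strictly increasing sequences `b₁ < ⋯ < b_d` of
positive integers with `b₁ ≤ k` such that each difference `b_i − b_{i−1}` lies
in `{1, …, k−1}` when the residue of `b_i` is in `O` and in `{1, …, k}`
otherwise, then `f 1 = k`, `f 2 = k² − ℓ`, and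
`f (d+2) = (k−1)·f (d+1) + (k−ℓ)·f d` for all `d ≥ 1`. -/
theorem typeB_basis_count_lucas_recurrence (k ℓ : ℕ) (hk : 1 ≤ k)
    (O : Finset ℕ) (hO : O ⊆ Finset.Icc 1 k) (hcard : O.card = ℓ)
    (f : ℕ → ℕ)
    (hf : ∀ d, 1 ≤ d → f d =
      {l : List ℕ | l.length = d ∧ (∀ x ∈ l, 0 < x) ∧ (∀ x ∈ l.head?, x ≤ k) ∧
        l.Chain' (fun a b =>
          if res k b ∈ O then 1 ≤ b - a ∧ b - a ≤ k - 1
          else 1 ≤ b - a ∧ b - a ≤ k)}.ncard) :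
    f 1 = k ∧ f 2 = k ^ 2 - ℓ ∧
      ∀ d, 1 ≤ d → f (d + 2) = (k - 1) * f (d + 1) + (k - ℓ) * f d := by
  have hℓk : ℓ ≤ k := by
    have h := Finset.card_le_card hO
    rw [hcard, Nat.card_Icc] at h
    omega
  have hfV : ∀ n : ℕ, f (n + 1) = (TypeBAux.V k O n).card := by
    intro n
    rw [hf (n + 1) (by omega)]
    have hset : {l : List ℕ | l.length = n + 1 ∧ (∀ x ∈ l, 0 < x) ∧
        (∀ x ∈ l.head?, x ≤ k) ∧
        l.Chain' (fun a b =>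
          if res k b ∈ O then 1 ≤ b - a ∧ b - a ≤ k - 1
          else 1 ≤ b - a ∧ b - a ≤ k)} = ↑(TypeBAux.V k O n) := by
      ext l
      rw [Set.mem_setOf_eq, Finset.mem_coe, TypeBAux.mem_V hk n l]
    rw [hset, Set.ncard_coe_finset]
  refine ⟨?_, ?_, ?_⟩
  · rw [hfV 0, TypeBAux.card_V_zero hk]
  · have hf2 : f 2 = (TypeBAux.V k O 1).card := hfV 1
    have h1 : (TypeBAux.V k O 1).card
        + ((TypeBAux.V k O 0).filter (fun l => res k (l.getLastD 0) ∈ O)).card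
        = k * (TypeBAux.V k O 0).card := TypeBAux.card_V_succ hk hO (k := k) (O := O) 0
    rw [TypeBAux.card_V_zero hk, TypeBAux.card_V_zero_filter hk hO, hcard] at h1
    obtain ⟨m, hm⟩ : ∃ m, k * k = m := ⟨_, rfl⟩
    rw [hm] at h1
    rw [hf2, pow_two, hm]
    omega
  · intro d hd
    obtain ⟨n, rfl⟩ : ∃ n, d = n + 1 := ⟨d - 1, by omega⟩
    have hF1 : f (n + 1) = (TypeBAux.V k O n).card := hfV n
    have hF2 : f (n + 1 + 1) = (TypeBAux.V k O (n + 1)).card := hfV (n + 1)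
    have hF3 : f (n + 1 + 2) = (TypeBAux.V k O (n + 2)).card := hfV (n + 2)
    have h1 := TypeBAux.card_V_succ hk hO (k := k) (O := O) n
    have h2 := TypeBAux.card_V_succ_filter hk hO (k := k) (O := O) n
    have h3 : (TypeBAux.V k O (n + 2)).card
        + ((TypeBAux.V k O (n + 1)).filter (fun l => res k (l.getLastD 0) ∈ O)).card
        = k * (TypeBAux.V k O (n + 1)).card :=
      TypeBAux.card_V_succ hk hO (k := k) (O := O) (n + 1)
    rw [hcard] at h2
    rw [hF1, hF2, hF3]
    zify [hk, hℓk]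
    have h1' : ((TypeBAux.V k O (n + 1)).card : ℤ)
        + ((TypeBAux.V k O n).filter (fun l => res k (l.getLastD 0) ∈ O)).card
        = k * (TypeBAux.V k O n).card := by exact_mod_cast h1
    have h2' : (((TypeBAux.V k O (n + 1)).filter (fun l => res k (l.getLastD 0) ∈ O)).card : ℤ)
        + ((TypeBAux.V k O n).filter (fun l => res k (l.getLastD 0) ∈ O)).card
        = ℓ * (TypeBAux.V k O n).card := by exact_mod_cast h2
    have h3' : ((TypeBAux.V k O (n + 2)).card : ℤ)
        + ((TypeBAux.V k O (n + 1)).filter (fun l => res k (l.getLastD 0) ∈ O)).card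
        = k * (TypeBAux.V k O (n + 1)).card := by exact_mod_cast h3
    linear_combination h3' - h2' + h1'
end

section
/- With s(d,m) ∈ ℤ[q] the generating polynomial of basal billiard partitions with d parts and largest part m, for all d ≥ 2 and n ≥ 2 one has s(d, 2n) = q^{2n}·s(d−1, 2(n−1)) + q^{4n−1}·s(d−2, 2(n−1)). -/
open Classical Polynomial in
/-- `s d m ∈ ℤ[q]` is the generating polynomial `∑_π q^{|π|}` of basal billiard
partitions `π` with exactly `d` parts and largest part `m` (such a partition has
all parts `≤ m`, hence is encoded as a function `Fin d → Fin (m+1)`, and each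
basal billiard partition with `d` parts and largest part `m` occurs exactly once
in the sum below); in particular `s 0 m = 0`. -/
noncomputable def s (d m : ℕ) : Polynomial ℤ :=
  ∑ f : Fin d → Fin (m + 1),
    if IsBasal (List.ofFn fun i => (f i : ℕ)) ∧
        (List.ofFn fun i => (f i : ℕ)).head? = some m
    then X ^ (List.ofFn fun i => (f i : ℕ)).sum
    else 0

/- ### auxiliary lemmas -/

instance : IsTrans ℕ (fun a b => b < a) := ⟨fun _ _ _ h1 h2 => lt_trans h2 h1⟩

lemma mem_le_head {l : List ℕ} {m : ℕ} (hc : l.Chain' (fun a b => b < a))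
    (hh : l.head? = some m) : ∀ x ∈ l, x ≤ m := by
  cases l with
  | nil => simp at hh
  | cons a t =>
    simp only [List.head?_cons, Option.some.injEq] at hh
    subst hh
    unfold List.Chain' at hc
    rw [List.isChain_iff_pairwise, List.pairwise_cons] at hc
    intro x hx
    rcases List.mem_cons.mp hx with rfl | hx
    · exact le_rfl
    · exact le_of_lt (hc.1 x hx)

lemma isBasal_cons_cons (a b : ℕ) (t : List ℕ) :
    IsBasal (a :: b :: t) ↔
      IsBasal (b :: t) ∧ b < a ∧ a - b ≤ 2 ∧ ¬(Odd a ∧ Odd b) := by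
  simp only [IsBasal, IsEBP, List.Chain', List.isChain_cons_cons, List.getLast?_cons_cons,
    List.forall_mem_cons, ne_eq, reduceCtorEq, not_false_eq_true, true_and]
  constructor
  · rintro ⟨⟨⟨h1, h2⟩, ⟨h3, h4⟩, h5, h6, h7⟩, h8, h9, h10⟩
    exact ⟨⟨⟨h2, h4, h5, h7⟩, h8, h10⟩, h1, h9, h6⟩
  · rintro ⟨⟨⟨h2, h4, h5, h7⟩, h8, h10⟩, h1, h9, h6⟩
    exact ⟨⟨⟨h1, h2⟩, ⟨by omega, h4⟩, h5, h6, h7⟩, h8, h9, h10⟩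

lemma isBasal_even_head (j : ℕ) (l : List ℕ) :
    IsBasal ((2 * j + 4) :: l) ↔
      IsBasal l ∧ (l.head? = some (2 * j + 2) ∨ l.head? = some (2 * j + 3)) := by
  cases l with
  | nil =>
    simp only [List.head?_nil, reduceCtorEq, or_self, and_false, iff_false]
    rintro ⟨-, h, -⟩
    simp only [List.getLast?_singleton, Option.some.injEq] at h
    omega
  | cons b t =>
    rw [isBasal_cons_cons]
    simp only [List.head?_cons, Option.some.injEq, Nat.odd_iff]
    constructor
    · rintro ⟨hb, h1, h2, -⟩
      exact ⟨hb, by omega⟩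
    · rintro ⟨hb, h⟩
      exact ⟨hb, by omega, by omega, by omega⟩

lemma isBasal_odd_head (j : ℕ) (l : List ℕ) :
    IsBasal ((2 * j + 3) :: l) ↔ IsBasal l ∧ l.head? = some (2 * j + 2) := by
  cases l with
  | nil =>
    simp only [List.head?_nil, reduceCtorEq, and_false, iff_false]
    rintro ⟨-, h, -⟩
    simp only [List.getLast?_singleton, Option.some.injEq] at h
    omega
  | cons b t =>
    rw [isBasal_cons_cons]
    simp only [List.head?_cons, Option.some.injEq, Nat.odd_iff]
    constructor
    · rintro ⟨hb, h1, h2, h3⟩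
      refine ⟨hb, ?_⟩
      omega
    · rintro ⟨hb, h⟩
      exact ⟨hb, by omega, by omega, by omega⟩

open Classical Polynomial in
lemma collapse (M d v : ℕ) (hv : v < M + 1) (C : List ℕ → Prop) :
    (∑ f : Fin (d + 1) → Fin (M + 1),
      if C (List.ofFn fun i => ((f i : ℕ))) ∧
          (List.ofFn fun i => ((f i : ℕ))).head? = some v
      then (X : Polynomial ℤ) ^ (List.ofFn fun i => ((f i : ℕ))).sum else 0)
    = ∑ g : Fin d → Fin (M + 1),
      if C (v :: List.ofFn fun i => ((g i : ℕ)))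
      then X ^ (v + (List.ofFn fun i => ((g i : ℕ))).sum) else 0 := by
  classical
  rw [← (Fin.consEquiv (fun _ : Fin (d + 1) => Fin (M + 1))).sum_comp]
  rw [Fintype.sum_prod_type]
  rw [Finset.sum_eq_single (⟨v, hv⟩ : Fin (M + 1))
    (fun a _ ha => Finset.sum_eq_zero (by
      intro g _
      rw [if_neg]
      rintro ⟨-, hh⟩
      simp only [Fin.consEquiv_apply, List.ofFn_succ, Fin.cons_zero, Fin.cons_succ,
        List.head?_cons, Option.some.injEq] at hh
      exact ha (Fin.ext hh)))
    (fun h => absurd (Finset.mem_univ _) h)]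
  apply Finset.sum_congr rfl
  intro g _
  simp only [Fin.consEquiv_apply, List.ofFn_succ, Fin.cons_zero, Fin.cons_succ,
    List.head?_cons, Option.some.injEq, List.sum_cons, and_true]

open Classical Polynomial in
lemma sum_cast (d m M : ℕ) (h : m ≤ M) :
    (∑ f : Fin d → Fin (M + 1),
      if IsBasal (List.ofFn fun i => ((f i : ℕ))) ∧
          (List.ofFn fun i => ((f i : ℕ))).head? = some m
      then (X : Polynomial ℤ) ^ (List.ofFn fun i => ((f i : ℕ))).sum else 0) = s d m := by
  classical
  set F : (Fin d → Fin (M + 1)) → Polynomial ℤ := fun f =>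
    if IsBasal (List.ofFn fun i => ((f i : ℕ))) ∧
        (List.ofFn fun i => ((f i : ℕ))).head? = some m
    then (X : Polynomial ℤ) ^ (List.ofFn fun i => ((f i : ℕ))).sum else 0 with hF
  have hm : m + 1 ≤ M + 1 := by omega
  set e : (Fin d → Fin (m + 1)) → (Fin d → Fin (M + 1)) :=
    fun g i => Fin.castLE hm (g i) with he
  have hinj : ∀ x ∈ (Finset.univ : Finset (Fin d → Fin (m + 1))), ∀ y ∈ Finset.univ,
      e x = e y → x = y := by
    intro x _ y _ hxy
    funext i
    exact Fin.castLE_injective hm (congrFun hxy i)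
  have h1 : ∑ f : Fin d → Fin (M + 1), F f = ∑ f ∈ Finset.univ.image e, F f := by
    symm
    apply Finset.sum_subset (Finset.subset_univ _)
    intro f _ hf
    simp only [hF]
    rw [if_neg]
    rintro ⟨hb, hh⟩
    apply hf
    have hbd : ∀ i : Fin d, (f i : ℕ) ≤ m := by
      intro i
      apply mem_le_head hb.1.2.1 hh
      rw [List.mem_ofFn]
      exact ⟨i, rfl⟩
    refine Finset.mem_image.mpr ⟨fun i => ⟨(f i : ℕ), by have := hbd i; omega⟩,
      Finset.mem_univ _, ?_⟩
    funext i
    exact Fin.ext rfl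
  rw [h1, Finset.sum_image hinj, s]
  apply Finset.sum_congr rfl
  intro g _
  simp only [hF, he, Fin.coe_castLE]

lemma ite_or_split {p q r : Prop} [Decidable p] [Decidable q] [Decidable r]
    (h : ¬(q ∧ r)) (x : Polynomial ℤ) :
    (if p ∧ (q ∨ r) then x else 0) =
      (if p ∧ q then x else 0) + (if p ∧ r then x else 0) := by
  by_cases hp : p <;> by_cases hq : q <;> by_cases hr : r <;> simp_all

set_option maxHeartbeats 1000000 in
open Polynomial in
/-- For all `d ≥ 2` and `n ≥ 2`,
`s(d, 2n) = q^{2n}·s(d−1, 2(n−1)) + q^{4n−1}·s(d−2, 2(n−1))`. -/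
theorem s_even_second_order_recursion :
    ∀ d n : ℕ, 2 ≤ d → 2 ≤ n →
      s d (2 * n) =
        X ^ (2 * n) * s (d - 1) (2 * (n - 1)) +
          X ^ (4 * n - 1) * s (d - 2) (2 * (n - 1)) := by
  intro d n hd hn
  classical
  obtain ⟨k, rfl⟩ : ∃ k, d = k + 2 := ⟨d - 2, by omega⟩
  obtain ⟨j, rfl⟩ : ∃ j, n = j + 2 := ⟨n - 2, by omega⟩
  rw [show k + 2 - 1 = k + 1 from rfl, show k + 2 - 2 = k from rfl,
    show j + 2 - 1 = j + 1 from rfl, show 2 * (j + 2) = 2 * j + 4 by ring,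
    show 2 * (j + 1) = 2 * j + 2 by ring, show 4 * (j + 2) - 1 = 4 * j + 7 by omega]
  conv_lhs => rw [s]
  rw [collapse (2 * j + 4) (k + 1) (2 * j + 4) (by omega) IsBasal]
  have step1 : ∀ g : Fin (k + 1) → Fin (2 * j + 4 + 1),
      (if IsBasal ((2 * j + 4) :: List.ofFn fun i => ((g i : ℕ)))
        then (X : Polynomial ℤ) ^ (2 * j + 4 + (List.ofFn fun i => ((g i : ℕ))).sum) else 0)
      = X ^ (2 * j + 4) *
          (if IsBasal (List.ofFn fun i => ((g i : ℕ))) ∧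
              (List.ofFn fun i => ((g i : ℕ))).head? = some (2 * j + 2)
            then X ^ (List.ofFn fun i => ((g i : ℕ))).sum else 0)
        + X ^ (2 * j + 4) *
          (if IsBasal (List.ofFn fun i => ((g i : ℕ))) ∧
              (List.ofFn fun i => ((g i : ℕ))).head? = some (2 * j + 3)
            then X ^ (List.ofFn fun i => ((g i : ℕ))).sum else 0) := by
    intro g
    rw [isBasal_even_head, pow_add]
    split_ifs with h1 h2 h3 h4 h5 h6 h7 <;>
      first
        | ring1
        | tauto
        | (exfalso; have hxy := h2.2.symm.trans h3.2;
            simp only [Option.some.injEq] at hxy; omega)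
  rw [Finset.sum_congr rfl (fun g _ => step1 g), Finset.sum_add_distrib,
    ← Finset.mul_sum, ← Finset.mul_sum]
  congr 1
  · rw [sum_cast (k + 1) (2 * j + 2) (2 * j + 4) (by omega)]
  · rw [collapse (2 * j + 4) k (2 * j + 3) (by omega) IsBasal]
    have step2 : ∀ h : Fin k → Fin (2 * j + 4 + 1),
        (if IsBasal ((2 * j + 3) :: List.ofFn fun i => ((h i : ℕ)))
          then (X : Polynomial ℤ) ^ (2 * j + 3 + (List.ofFn fun i => ((h i : ℕ))).sum) else 0)
        = X ^ (2 * j + 3) *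
            (if IsBasal (List.ofFn fun i => ((h i : ℕ))) ∧
                (List.ofFn fun i => ((h i : ℕ))).head? = some (2 * j + 2)
              then X ^ (List.ofFn fun i => ((h i : ℕ))).sum else 0) := by
      intro h
      rw [isBasal_odd_head, pow_add]
      split_ifs <;> ring1
    rw [Finset.sum_congr rfl (fun h _ => step2 h), ← Finset.mul_sum,
      sum_cast k (2 * j + 2) (2 * j + 4) (by omega), ← mul_assoc, ← pow_add,
      show 2 * j + 4 + (2 * j + 3) = 4 * j + 7 by omega]
end

section
/- With s(d,m) ∈ ℤ[q] the generating polynomial of basal billiard partitions with d parts and largest part m, for every n ≥ 1 the following identity holds in the polynomial ring ℤ[q,z]: ∑_{d=1}^{2n} s(d, 2n)·z^d = q^{n(n+1)}·z^n·∏_{i=1}^{n−1} (1 + q^{2i+1} z). -/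
/-- The basal billiard list with largest part `2*n` determined by the set `S`
of indices `i` such that the odd part `2*i+1` occurs. -/
def bl : ℕ → Finset ℕ → List ℕ
  | 0, _ => []
  | 1, _ => [2]
  | (k+2), S => (2*k+4) :: (if (k+1) ∈ S then (2*k+3) :: bl (k+1) S else bl (k+1) S)

lemma bl_head : ∀ (n : ℕ) (S : Finset ℕ), (bl (n+1) S).head? = some (2*n+2)
  | 0, S => rfl
  | (k+1), S => by
    show ((2*k+4) :: _).head? = _
    simp; ring

lemma bl_ne_nil (n : ℕ) (S : Finset ℕ) : bl (n+1) S ≠ [] := by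
  intro h
  have := bl_head n S
  rw [h] at this
  simp at this

lemma bl_mem_le : ∀ (n : ℕ) (S : Finset ℕ) (x : ℕ), x ∈ bl (n+1) S → x ≤ 2*n+2
  | 0, S, x, hx => by simp [bl] at hx; omega
  | (k+1), S, x, hx => by
    show x ≤ 2*(k+1)+2
    rw [show k+1+1 = k+2 from rfl, bl] at hx
    rcases List.mem_cons.1 hx with h | h
    · omega
    · split_ifs at h with hk
      · rcases List.mem_cons.1 h with h | h
        · omega
        · have := bl_mem_le k S x h; omega
      · have := bl_mem_le k S x h; omega

lemma sum_inter_succ {M : Type*} [AddCommMonoid M] (S : Finset ℕ) (k : ℕ) (f : ℕ → M) :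
    ∑ i ∈ Finset.Icc 1 (k+1) ∩ S, f i =
      (if k+1 ∈ S then f (k+1) else 0) + ∑ i ∈ Finset.Icc 1 k ∩ S, f i := by
  have h : Finset.Icc 1 (k+1) = insert (k+1) (Finset.Icc 1 k) := by
    ext x; simp [Finset.mem_Icc, Finset.mem_insert]; omega
  rw [h]
  by_cases hk : k+1 ∈ S
  · rw [Finset.insert_inter_of_mem hk, Finset.sum_insert (by simp [Finset.mem_Icc]), if_pos hk]
  · rw [Finset.insert_inter_of_notMem hk, if_neg hk, zero_add]

lemma bl_sum : ∀ (n : ℕ) (S : Finset ℕ),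
    (bl (n+1) S).sum = (n+1)*(n+2) + ∑ i ∈ Finset.Icc 1 n ∩ S, (2*i+1)
  | 0, S => by simp [bl]
  | (k+1), S => by
    rw [show k+1+1 = k+2 from rfl, bl, sum_inter_succ]
    have IH := bl_sum k S
    split_ifs with hk
    · simp only [List.sum_cons, IH]; ring_nf
    · simp only [List.sum_cons, IH]; ring_nf

lemma bl_length : ∀ (n : ℕ) (S : Finset ℕ),
    (bl (n+1) S).length = (n+1) + (Finset.Icc 1 n ∩ S).card
  | 0, S => by simp [bl]
  | (k+1), S => by
    rw [show k+1+1 = k+2 from rfl, bl]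
    have hcard : (Finset.Icc 1 (k+1) ∩ S).card =
        (if k+1 ∈ S then 1 else 0) + (Finset.Icc 1 k ∩ S).card := by
      rw [Finset.card_eq_sum_ones, Finset.card_eq_sum_ones, sum_inter_succ]
    have IH := bl_length k S
    split_ifs at hcard ⊢ with hk
    · simp only [List.length_cons, IH, hcard]; ring
    · simp only [List.length_cons, IH, hcard]; ring

lemma bl_mem_odd : ∀ (n : ℕ) (S : Finset ℕ) (i : ℕ),
    (2*i+1) ∈ bl (n+1) S ↔ (i ∈ S ∧ 1 ≤ i ∧ i ≤ n)
  | 0, S, i => by simp [bl]; omega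
  | (k+1), S, i => by
    rw [show k+1+1 = k+2 from rfl, bl]
    have IH := bl_mem_odd k S i
    split_ifs with hk
    · simp only [List.mem_cons, IH]
      constructor
      · rintro (h | h | h)
        · omega
        · have : i = k+1 := by omega
          subst this; exact ⟨hk, by omega, by omega⟩
        · exact ⟨h.1, h.2.1, by omega⟩
      · rintro ⟨h1, h2, h3⟩
        by_cases hik : i = k+1
        · subst hik; right; left; ring
        · right; right; exact ⟨h1, h2, by omega⟩
    · simp only [List.mem_cons, IH]
      constructor
      · rintro (h | h)
        · omega
        · exact ⟨h.1, h.2.1, by omega⟩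
      · rintro ⟨h1, h2, h3⟩
        by_cases hik : i = k+1
        · subst hik; exact absurd h1 hk
        · right; exact ⟨h1, h2, by omega⟩

lemma bl_inj {n : ℕ} {S T : Finset ℕ} (hS : S ⊆ Finset.Icc 1 n) (hT : T ⊆ Finset.Icc 1 n)
    (h : bl (n+1) S = bl (n+1) T) : S = T := by
  ext i
  constructor
  · intro hi
    have hb := hS hi; rw [Finset.mem_Icc] at hb
    have : (2*i+1) ∈ bl (n+1) S := (bl_mem_odd n S i).2 ⟨hi, hb.1, hb.2⟩
    rw [h, bl_mem_odd] at this; exact this.1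
  · intro hi
    have hb := hT hi; rw [Finset.mem_Icc] at hb
    have : (2*i+1) ∈ bl (n+1) T := (bl_mem_odd n T i).2 ⟨hi, hb.1, hb.2⟩
    rw [← h, bl_mem_odd] at this; exact this.1

lemma getLast?_cons_ne_nil {a : ℕ} {t : List ℕ} (ht : t ≠ []) :
    (a :: t).getLast? = t.getLast? := by
  cases t with
  | nil => exact absurd rfl ht
  | cons b u => exact List.getLast?_cons_cons ..

lemma basal_cons {a : ℕ} {l : List ℕ} (h : IsBasal l) (hl : l ≠ [])
    (hh : ∀ b ∈ l.head?, b < a ∧ a - b ≤ 2 ∧ ¬(Odd a ∧ Odd b)) : IsBasal (a :: l) := by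
  obtain ⟨⟨-, hc, hpos, hlast, hpar⟩, h2, hd⟩ := h
  refine ⟨⟨List.cons_ne_nil _ _, ?_, ?_, ?_, ?_⟩, ?_, ?_⟩
  · exact List.isChain_cons.2 ⟨fun y hy => ((hh y hy).1), hc⟩
  · intro x hx
    rcases List.mem_cons.1 hx with rfl | hx
    · obtain ⟨b, hb⟩ : ∃ b, l.head? = some b := by
        cases l with | nil => exact absurd rfl hl | cons c u => exact ⟨c, rfl⟩
      have := (hh b hb).1
      have := hpos b (List.mem_of_mem_head? hb)
      omega
    · exact hpos x hx
  · rw [getLast?_cons_ne_nil hl]; exact hlast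
  · exact List.isChain_cons.2 ⟨fun y hy => ((hh y hy).2.2), hpar⟩
  · rw [getLast?_cons_ne_nil hl]; exact h2
  · exact List.isChain_cons.2 ⟨fun y hy => ((hh y hy).2.1), hd⟩

lemma basal_two : IsBasal [2] := by
  refine ⟨⟨by simp, List.isChain_singleton _, by simp, by simp, List.isChain_singleton _⟩, by simp, List.isChain_singleton _⟩

lemma bl_basal : ∀ (n : ℕ) (S : Finset ℕ), IsBasal (bl (n+1) S)
  | 0, S => basal_two
  | (k+1), S => by
    have IH := bl_basal k S
    have hne := bl_ne_nil k S
    have hh := bl_head k S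
    rw [show k+1+1 = k+2 from rfl, bl]
    split_ifs with hk
    · have h1 : IsBasal ((2*k+3) :: bl (k+1) S) := by
        refine basal_cons IH hne ?_
        intro b hb
        rw [hh] at hb
        simp only [Option.mem_some_iff] at hb
        subst hb
        refine ⟨by omega, by omega, ?_⟩
        rintro ⟨-, h⟩
        exact (Nat.not_odd_iff_even.mpr ⟨k+1, by ring⟩) h
      refine basal_cons h1 (List.cons_ne_nil _ _) ?_
      intro b hb
      simp only [List.head?_cons, Option.mem_some_iff] at hb
      subst hb
      refine ⟨by omega, by omega, ?_⟩
      rintro ⟨h, -⟩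
      exact (Nat.not_odd_iff_even.mpr ⟨k+2, by ring⟩) h
    · refine basal_cons IH hne ?_
      intro b hb
      rw [hh] at hb
      simp only [Option.mem_some_iff] at hb
      subst hb
      refine ⟨by omega, by omega, ?_⟩
      rintro ⟨h, -⟩
      exact (Nat.not_odd_iff_even.mpr ⟨k+2, by ring⟩) h

lemma basal_tail {a : ℕ} {t : List ℕ} (h : IsBasal (a :: t)) (ht : t ≠ []) : IsBasal t := by
  obtain ⟨⟨-, hc, hpos, hlast, hpar⟩, h2, hd⟩ := h
  refine ⟨⟨ht, hc.tail, fun x hx => hpos x (List.mem_cons_of_mem a hx), ?_, hpar.tail⟩, ?_, hd.tail⟩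
  · rw [← getLast?_cons_ne_nil (a := a) ht]; exact hlast
  · rw [← getLast?_cons_ne_nil (a := a) ht]; exact h2

lemma bl_insert_of_ge : ∀ (n : ℕ) (S : Finset ℕ) (j : ℕ), n ≤ j → bl n (insert j S) = bl n S
  | 0, S, j, h => rfl
  | 1, S, j, h => rfl
  | (k+2), S, j, h => by
    rw [bl, bl, bl_insert_of_ge (k+1) S j (by omega)]
    by_cases hk1 : k+1 ∈ S
    · rw [if_pos hk1, if_pos (Finset.mem_insert_of_mem hk1)]
    · rw [if_neg hk1, if_neg (by simp only [Finset.mem_insert]; push_neg; exact ⟨by omega, hk1⟩)]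

lemma basal_characterize : ∀ (n : ℕ) (l : List ℕ), IsBasal l → l.head? = some (2*n+2) →
    ∃ S, S ⊆ Finset.Icc 1 n ∧ l = bl (n+1) S
  | 0, l, hb, hh => by
    refine ⟨∅, by simp, ?_⟩
    obtain ⟨a, t, rfl⟩ : ∃ a t, l = a :: t := by
      cases l with
      | nil => simp at hh
      | cons a t => exact ⟨a, t, rfl⟩
    simp only [List.head?_cons, Option.some_inj] at hh
    subst hh
    show (2 : ℕ) :: t = [2]
    rcases t.eq_nil_or_concat with rfl | ⟨u, b, rfl⟩
    · rfl
    · exfalso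
      have h2 := hb.2.1
      rw [getLast?_cons_ne_nil (by simp)] at h2
      rw [List.concat_eq_append, List.getLast?_concat, Option.some_inj] at h2
      subst h2
      have hc := hb.1.2.1
      have hpw := (List.isChain_iff_pairwise.mp hc)
      have : (2:ℕ) ∈ u.concat 2 := by simp
      have := (List.pairwise_cons.mp hpw).1 2 this
      omega
  | (n+1), l, hb, hh => by
    obtain ⟨a, t, rfl⟩ : ∃ a t, l = a :: t := by
      cases l with
      | nil => simp at hh
      | cons a t => exact ⟨a, t, rfl⟩
    simp only [List.head?_cons, Option.some_inj] at hh
    subst hh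
    have ht : t ≠ [] := by
      rintro rfl
      have := hb.2.1
      simp at this
    obtain ⟨b, u, rfl⟩ : ∃ b u, t = b :: u := by
      cases t with
      | nil => exact absurd rfl ht
      | cons b u => exact ⟨b, u, rfl⟩
    have hlt : b < 2*(n+1)+2 := (List.isChain_cons_cons.mp hb.1.2.1).1
    have hd2 : 2*(n+1)+2 - b ≤ 2 := (List.isChain_cons_cons.mp hb.2.2).1
    have htb : IsBasal (b :: u) := basal_tail hb ht
    have hbcase : b = 2*n+2 ∨ b = 2*n+3 := by omega
    rcases hbcase with rfl | rfl
    · obtain ⟨S, hS, hEq⟩ := basal_characterize n ((2*n+2) :: u) htb rfl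
      refine ⟨S, fun x hx => Finset.mem_Icc.2 ⟨(Finset.mem_Icc.1 (hS hx)).1,
        le_trans (Finset.mem_Icc.1 (hS hx)).2 (by omega)⟩, ?_⟩
      rw [show n+1+1 = n+2 from rfl, bl]
      have hnS : n+1 ∉ S := fun h => by have := Finset.mem_Icc.1 (hS h); omega
      rw [if_neg hnS, ← hEq]
      congr 1
    · -- second element is the odd 2n+3
      have hu : u ≠ [] := by
        rintro rfl
        have := hb.2.1
        simp at this
      obtain ⟨c, v, rfl⟩ : ∃ c v, u = c :: v := by
        cases u with
        | nil => exact absurd rfl hu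
        | cons c v => exact ⟨c, v, rfl⟩
      have hlt2 : c < 2*n+3 := (List.isChain_cons_cons.mp htb.1.2.1).1
      have hd22 : 2*n+3 - c ≤ 2 := (List.isChain_cons_cons.mp htb.2.2).1
      have hpar : ¬(Odd (2*n+3) ∧ Odd c) := (List.isChain_cons_cons.mp htb.1.2.2.2.2).1
      have hceq : c = 2*n+2 := by
        rcases (by omega : c = 2*n+2 ∨ c = 2*n+1) with h | h
        · exact h
        · exfalso; exact hpar ⟨⟨n+1, by omega⟩, h ▸ ⟨n, by omega⟩⟩
      subst hceq
      have htc : IsBasal ((2*n+2) :: v) := basal_tail htb (List.cons_ne_nil _ _)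
      obtain ⟨S, hS, hEq⟩ := basal_characterize n ((2*n+2) :: v) htc rfl
      refine ⟨insert (n+1) S, ?_, ?_⟩
      · intro x hx
        rcases Finset.mem_insert.1 hx with rfl | hx
        · exact Finset.mem_Icc.2 ⟨by omega, le_rfl⟩
        · have := Finset.mem_Icc.1 (hS hx); exact Finset.mem_Icc.2 ⟨this.1, by omega⟩
      · rw [show n+1+1 = n+2 from rfl, bl, if_pos (Finset.mem_insert_self _ _),
          bl_insert_of_ge (n+1) S (n+1) le_rfl, ← hEq]
        congr 1

lemma mem_B_lt {m : ℕ} {l : List ℕ}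
    (hl : l ∈ ((Finset.Icc 1 m).powerset).image (bl (m+1))) (k : ℕ) :
    l.getD k 0 < 2*m+2+1 := by
  obtain ⟨S, hS, rfl⟩ := Finset.mem_image.1 hl
  by_cases hk : k < (bl (m+1) S).length
  · rw [List.getD_eq_getElem _ _ hk]
    have := bl_mem_le m S _ (List.getElem_mem hk)
    omega
  · rw [List.getD_eq_default _ _ (by omega)]
    omega

lemma ofFn_getD {α : Type*} (l : List α) (a : α) (d : ℕ) (h : l.length = d) :
    List.ofFn (fun k : Fin d => l.getD k a) = l := by
  apply List.ext_getElem (by simp [h])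
  intro i h1 h2
  rw [List.getElem_ofFn]
  exact List.getD_eq_getElem _ _ h2

open Polynomial in
lemma lemmaA (m d : ℕ) :
    C (s d (2*m+2)) * (X : Polynomial (Polynomial ℤ))^d =
      ∑ l ∈ (((Finset.Icc 1 m).powerset).image (bl (m+1))).filter (fun l => l.length = d),
        C ((X : Polynomial ℤ)^l.sum) * (X : Polynomial (Polynomial ℤ))^l.length := by
  classical
  have step1 : C (s d (2*m+2)) * (X : Polynomial (Polynomial ℤ))^d
      = ∑ f ∈ Finset.univ.filter (fun f : Fin d → Fin (2*m+2+1) =>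
          IsBasal (List.ofFn fun i => (f i : ℕ)) ∧
            (List.ofFn fun i => (f i : ℕ)).head? = some (2*m+2)),
        C ((X : Polynomial ℤ) ^ (List.ofFn fun i => (f i : ℕ)).sum) *
          (X : Polynomial (Polynomial ℤ))^d := by
    rw [Finset.sum_filter, s, map_sum, Finset.sum_mul]
    refine Finset.sum_congr rfl fun f _ => ?_
    split_ifs with h
    · rfl
    · simp
  rw [step1]
  refine Finset.sum_bij' (fun f _ => List.ofFn fun i => ((f i : ℕ)))
    (fun l hl => fun k : Fin d =>
      (⟨l.getD k 0, mem_B_lt (Finset.mem_filter.1 hl).1 k⟩ : Fin (2*m+2+1)))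
    ?_ ?_ ?_ ?_ ?_
  · -- hi
    intro f hf
    rw [Finset.mem_filter] at hf ⊢
    obtain ⟨-, hbas, hhead⟩ := hf
    obtain ⟨S, hS, hEq⟩ := basal_characterize m _ hbas hhead
    exact ⟨Finset.mem_image.2 ⟨S, Finset.mem_powerset.2 hS, hEq.symm⟩, List.length_ofFn⟩
  · -- hj
    intro l hl
    rw [Finset.mem_filter] at hl
    obtain ⟨hlB, hlen⟩ := hl
    have hre : (List.ofFn fun k : Fin d =>
        ((⟨l.getD k 0, mem_B_lt hlB k⟩ : Fin (2*m+2+1)) : ℕ)) = l := ofFn_getD l 0 d hlen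
    rw [Finset.mem_filter]
    refine ⟨Finset.mem_univ _, ?_⟩
    rw [hre]
    obtain ⟨S, hS, rfl⟩ := Finset.mem_image.1 hlB
    exact ⟨bl_basal m S, bl_head m S⟩
  · -- left inverse
    intro f hf
    funext k
    apply Fin.ext
    show (List.ofFn fun i => ((f i : ℕ))).getD k 0 = (f k : ℕ)
    rw [List.getD_eq_getElem _ _ (by simpa using k.2)]
    simp [List.getElem_ofFn]
  · -- right inverse
    intro l hl
    exact ofFn_getD l 0 d (Finset.mem_filter.1 hl).2
  · -- values
    intro f hf
    rw [List.length_ofFn]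

open Polynomial in
/-- For every `n ≥ 1`, in `ℤ[q][z]` (with `z` the outer variable and `q` the
inner one): `∑_{d=1}^{2n} s(d, 2n)·z^d = q^{n(n+1)}·z^n·∏_{i=1}^{n−1}(1 + q^{2i+1} z)`. -/
theorem s_even_generating_product (n : ℕ) (hn : 1 ≤ n) :
    ∑ d ∈ Finset.Icc 1 (2 * n), (C (s d (2 * n)) * X ^ d : Polynomial (Polynomial ℤ)) =
      C ((X : Polynomial ℤ) ^ (n * (n + 1))) * X ^ n *
        ∏ i ∈ Finset.Icc 1 (n - 1), (1 + C ((X : Polynomial ℤ) ^ (2 * i + 1)) * X) := by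
  classical
  obtain ⟨m, rfl⟩ : ∃ m, n = m + 1 := ⟨n - 1, by omega⟩
  have h1 : ∑ d ∈ Finset.Icc 1 (2 * (m+1)), (C (s d (2 * (m+1))) * X ^ d : Polynomial (Polynomial ℤ))
      = ∑ l ∈ ((Finset.Icc 1 m).powerset).image (bl (m+1)),
          C ((X : Polynomial ℤ)^l.sum) * (X : Polynomial (Polynomial ℤ))^l.length := by
    rw [← Finset.sum_fiberwise_of_maps_to (g := fun l : List ℕ => l.length)
      (t := Finset.Icc 1 (2 * (m+1))) ?_ (fun l => C ((X : Polynomial ℤ)^l.sum) *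
        (X : Polynomial (Polynomial ℤ))^l.length)]
    · refine Finset.sum_congr rfl fun d _ => ?_
      rw [show 2*(m+1) = 2*m+2 from by ring, lemmaA]
    · intro l hl
      obtain ⟨S, hS, rfl⟩ := Finset.mem_image.1 hl
      rw [Finset.mem_powerset] at hS
      show (bl (m+1) S).length ∈ _
      rw [bl_length, Finset.mem_Icc]
      have hc : (Finset.Icc 1 m ∩ S).card ≤ (Finset.Icc 1 m).card :=
        Finset.card_le_card (Finset.inter_subset_left)
      rw [Nat.card_Icc] at hc
      omega
  rw [h1, Finset.sum_image
    (fun S hS T hT h => bl_inj (Finset.mem_powerset.1 hS) (Finset.mem_powerset.1 hT) h)]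
  have hprod : ∏ i ∈ Finset.Icc 1 (m+1-1), (1 + C ((X : Polynomial ℤ)^(2*i+1)) *
        (X : Polynomial (Polynomial ℤ)))
      = ∑ S ∈ (Finset.Icc 1 m).powerset,
          ∏ i ∈ S, (C ((X : Polynomial ℤ)^(2*i+1)) * (X : Polynomial (Polynomial ℤ))) := by
    rw [show m+1-1 = m from rfl,
      Finset.prod_congr rfl (fun i _ => add_comm 1 (C ((X : Polynomial ℤ)^(2*i+1)) * X)),
      Finset.prod_add]
    exact Finset.sum_congr rfl fun t ht => by simp
  rw [hprod, Finset.mul_sum]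
  refine Finset.sum_congr rfl fun S hS => ?_
  rw [Finset.mem_powerset] at hS
  rw [bl_sum, bl_length, (Finset.inter_eq_right).2 hS, Finset.prod_mul_distrib,
    Finset.prod_const, ← map_prod, Finset.prod_pow_eq_pow_sum, pow_add, map_mul, pow_add]
  ring
end

section
/- With s(d,m) ∈ ℤ[q] the generating polynomial of basal billiard partitions with d parts and largest part m: s(d, 2n) = 0 unless n ≤ d ≤ 2n−1, and for n ≤ d ≤ 2n−1 the following identity holds in ℤ[q]: s(d, 2n) · ∏_{i=1}^{2n−d−1}(1 − q^{2i}) · ∏_{i=1}^{d−n}(1 − q^{2i}) = q^{2n² − 2dn − n + d² + 2d} · ∏_{i=1}^{n−1}(1 − q^{2i}). (Equivalently, s(d,2n) = q^{2n²−2dn−n+d²+2d} times the Gaussian binomial coefficient [n−1 choose 2n−d−1] in the variable q².) -/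
open Polynomial Finset

open Classical in
noncomputable def L (d m : ℕ) : Finset (List ℕ) :=
  ((Finset.univ : Finset (Fin d → Fin (m+1))).image
      (fun f => List.ofFn fun i => ((f i : ℕ)))).filter
    (fun l => IsBasal l ∧ l.head? = some m)

open Classical in
lemma mem_L {d m : ℕ} (l : List ℕ) :
    l ∈ L d m ↔ (l.length = d ∧ ∀ x ∈ l, x ≤ m) ∧ IsBasal l ∧ l.head? = some m := by
  rw [L, Finset.mem_filter, and_congr_left_iff]
  intro _
  simp only [Finset.mem_image, Finset.mem_univ, true_and]
  constructor
  · rintro ⟨f, rfl⟩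
    refine ⟨by simp, ?_⟩
    intro x hx
    simp only [List.mem_ofFn] at hx
    obtain ⟨i, rfl⟩ := hx
    exact Nat.lt_succ_iff.mp (f i).isLt
  · rintro ⟨rfl, h⟩
    refine ⟨fun i => ⟨l.get i, Nat.lt_succ_of_le (h _ (l.get_mem ..))⟩, ?_⟩
    exact List.ofFn_get l

open Classical in
lemma s_eq (d m : ℕ) : s d m = ∑ l ∈ L d m, (X : Polynomial ℤ) ^ l.sum := by
  rw [s, L, Finset.sum_filter, Finset.sum_image]
  · intro f _ g _ h
    funext i
    have := congrFun (List.ofFn_injective h) i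
    exact Fin.ext (by exact_mod_cast this)

lemma all_le_head {a : ℕ} {t : List ℕ} (h : (a::t).Chain' (fun x y => y < x)) :
    ∀ x ∈ a :: t, x ≤ a := by
  haveI : IsTrans ℕ (fun x y : ℕ => y < x) := ⟨fun _ _ _ h1 h2 => lt_trans h2 h1⟩
  replace h : (a::t).IsChain (fun x y : ℕ => y < x) := h
  rw [List.isChain_iff_pairwise] at h
  intro x hx
  rcases List.mem_cons.mp hx with rfl | hx
  · exact le_refl x
  · exact le_of_lt ((List.pairwise_cons.mp h).1 x hx)

lemma L_d_zero (d : ℕ) : L d 0 = ∅ := by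
  rw [Finset.eq_empty_iff_forall_notMem]
  intro l hl
  rw [mem_L] at hl
  obtain ⟨-, ⟨⟨-, -, hpos, -, -⟩, -, -⟩, hhead⟩ := hl
  cases l with
  | nil => simp at hhead
  | cons a t =>
    have : a = 0 := by simpa using hhead
    exact absurd (hpos a (by simp)) (by omega)

lemma L_zero (m : ℕ) : L 0 m = ∅ := by
  rw [Finset.eq_empty_iff_forall_notMem]
  intro l hl
  rw [mem_L] at hl
  obtain ⟨⟨hlen, -⟩, -, hhead⟩ := hl
  rw [List.length_eq_zero_iff] at hlen
  subst hlen
  simp at hhead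

lemma L_two (d : ℕ) : L d 2 = if d = 1 then {[2]} else ∅ := by
  have key : ∀ l ∈ L d 2, l = [2] ∧ d = 1 := by
    intro l hl
    rw [mem_L] at hl
    obtain ⟨⟨hlen, -⟩, ⟨⟨-, hdec, hpos, -, -⟩, hlast, hgap⟩, hhead⟩ := hl
    cases l with
    | nil => simp at hhead
    | cons a t =>
      have ha : a = 2 := by simpa using hhead
      subst ha
      cases t with
      | nil => exact ⟨rfl, by simp at hlen; omega⟩
      | cons b u =>
        have hb1 : b < 2 := (List.isChain_cons_cons.mp hdec).1
        have hb0 : 0 < b := hpos b (by simp)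
        have hb : b = 1 := by omega
        subst hb
        cases u with
        | nil => simp at hlast
        | cons c v =>
          have hc1 : c < 1 := (List.isChain_cons_cons.mp (List.isChain_cons_cons.mp hdec).2).1
          have hc0 : 0 < c := hpos c (by simp)
          omega
  split_ifs with hd
  · subst hd
    apply Finset.eq_singleton_iff_unique_mem.mpr
    constructor
    · rw [mem_L]
      refine ⟨⟨rfl, by intro x hx; simp at hx; omega⟩,
        ⟨⟨by simp, List.isChain_singleton 2, by intro x hx; simp at hx; omega, ?_, List.isChain_singleton 2⟩, ?_, List.isChain_singleton 2⟩, rfl⟩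
      · intro m hm
        simp at hm
        subst hm
        exact ⟨1, rfl⟩
      · rfl
    · intro l hl
      exact (key l hl).1
  · rw [Finset.eq_empty_iff_forall_notMem]
    intro l hl
    exact hd (key l hl).2

lemma L_rec (d n : ℕ) (hn : 2 ≤ n) :
    L (d+1) (2*n) = ((L d (2*n-2)).image (fun l => 2*n :: l)) ∪
      ((L (d-1) (2*n-2)).image (fun l => 2*n :: (2*n-1) :: l)) := by
  classical
  ext l
  simp only [Finset.mem_union, Finset.mem_image]
  constructor
  · intro hl
    rw [mem_L] at hl
    obtain ⟨⟨hlen, hle⟩, ⟨⟨hne, hdec, hpos, hev, hpar⟩, hlast, hgap⟩, hhead⟩ := hl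
    cases l with
    | nil => simp at hhead
    | cons a t =>
      have ha : a = 2*n := by simpa using hhead
      subst ha
      cases t with
      | nil =>
        simp only [List.getLast?_singleton, Option.some.injEq] at hlast
        omega
      | cons b u =>
        have hb1 : b < 2*n := (List.isChain_cons_cons.mp hdec).1
        have hb2 : 2*n - b ≤ 2 := (List.isChain_cons_cons.mp hgap).1
        have hlast' : (b :: u).getLast? = some 2 := by
          rw [← List.getLast?_cons_cons (a := 2*n)]; exact hlast
        have hb : b = 2*n - 1 ∨ b = 2*n - 2 := by omega
        rcases hb with hb | hb
        · -- second element is 2n-1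
          subst hb
          right
          cases u with
          | nil =>
            simp only [List.getLast?_singleton, Option.some.injEq] at hlast'
            omega
          | cons c v =>
            have hc1 : c < 2*n-1 := (List.isChain_cons_cons.mp (List.isChain_cons_cons.mp hdec).2).1
            have hc2 : 2*n-1 - c ≤ 2 := (List.isChain_cons_cons.mp (List.isChain_cons_cons.mp hgap).2).1
            have hc0 : 0 < c := hpos c (by simp)
            have hpar2 : ¬(Odd (2*n-1) ∧ Odd c) :=
              (List.isChain_cons_cons.mp (List.isChain_cons_cons.mp hpar).2).1
            have hc : c = 2*n-2 := by
              rcases (by omega : c = 2*n-2 ∨ c = 2*n-3) with h | h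
              · exact h
              · exact absurd ⟨⟨n-1, by omega⟩, ⟨n-2, by omega⟩⟩ hpar2
            refine ⟨c :: v, ?_, rfl⟩
            rw [mem_L]
            have hlast'' : (c :: v).getLast? = some 2 := by
              rw [← List.getLast?_cons_cons (a := 2*n-1)]; exact hlast'
            refine ⟨⟨?_, ?_⟩, ⟨⟨by simp, ?_, ?_, ?_, ?_⟩, hlast'', ?_⟩, ?_⟩
            · simp only [List.length_cons] at hlen ⊢; omega
            · have := all_le_head ((List.isChain_cons_cons.mp (List.isChain_cons_cons.mp hdec).2).2)
              intro x hx; have := this x hx; omega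
            · exact (List.isChain_cons_cons.mp (List.isChain_cons_cons.mp hdec).2).2
            · intro x hx; exact hpos x (by simp [hx])
            · intro m hm; rw [hlast''] at hm; simp at hm; subst hm; exact ⟨1, rfl⟩
            · exact (List.isChain_cons_cons.mp (List.isChain_cons_cons.mp hpar).2).2
            · exact (List.isChain_cons_cons.mp (List.isChain_cons_cons.mp hgap).2).2
            · simp [hc]
        · -- second element is 2n-2
          subst hb
          left
          refine ⟨(2*n-2) :: u, ?_, rfl⟩
          rw [mem_L]
          refine ⟨⟨?_, ?_⟩, ⟨⟨by simp, ?_, ?_, ?_, ?_⟩, hlast', ?_⟩, rfl⟩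
          · simp only [List.length_cons] at hlen ⊢; omega
          · exact all_le_head (List.isChain_cons_cons.mp hdec).2
          · exact (List.isChain_cons_cons.mp hdec).2
          · intro x hx; exact hpos x (by simp [hx])
          · intro m hm; rw [hlast'] at hm; simp at hm; subst hm; exact ⟨1, rfl⟩
          · exact (List.isChain_cons_cons.mp hpar).2
          · exact (List.isChain_cons_cons.mp hgap).2
  · rintro (⟨t, ht, rfl⟩ | ⟨u, hu, rfl⟩)
    · rw [mem_L] at ht
      obtain ⟨⟨hlen, hle⟩, ⟨⟨hne, hdec, hpos, hev, hpar⟩, hlast, hgap⟩, hhead⟩ := ht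
      obtain ⟨b, u, rfl⟩ : ∃ b u, t = b :: u := by
        cases t with
        | nil => exact absurd rfl hne
        | cons b u => exact ⟨b, u, rfl⟩
      have hb : b = 2*n - 2 := by simpa using hhead
      subst hb
      rw [mem_L]
      refine ⟨⟨?_, ?_⟩, ⟨⟨by simp, ?_, ?_, ?_, ?_⟩, ?_, ?_⟩, rfl⟩
      · simp only [List.length_cons] at hlen ⊢; omega
      · intro x hx
        rcases List.mem_cons.mp hx with rfl | hx
        · exact le_refl _
        · have := hle x hx; omega
      · exact List.isChain_cons_cons.mpr ⟨by omega, hdec⟩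
      · intro x hx
        rcases List.mem_cons.mp hx with rfl | hx
        · omega
        · exact hpos x hx
      · intro m hm
        rw [List.getLast?_cons_cons, hlast] at hm
        simp at hm; subst hm; exact ⟨1, rfl⟩
      · refine List.isChain_cons_cons.mpr ⟨?_, hpar⟩
        rintro ⟨h1, -⟩
        rw [Nat.odd_iff] at h1; omega
      · rw [List.getLast?_cons_cons]; exact hlast
      · exact List.isChain_cons_cons.mpr ⟨by omega, hgap⟩
    · rw [mem_L] at hu
      obtain ⟨⟨hlen, hle⟩, ⟨⟨hne, hdec, hpos, hev, hpar⟩, hlast, hgap⟩, hhead⟩ := hu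
      obtain ⟨c, v, rfl⟩ : ∃ c v, u = c :: v := by
        cases u with
        | nil => exact absurd rfl hne
        | cons c v => exact ⟨c, v, rfl⟩
      have hc : c = 2*n - 2 := by simpa using hhead
      subst hc
      have hd1 : 1 ≤ d := by
        simp only [List.length_cons] at hlen; omega
      rw [mem_L]
      refine ⟨⟨?_, ?_⟩, ⟨⟨by simp, ?_, ?_, ?_, ?_⟩, ?_, ?_⟩, rfl⟩
      · simp only [List.length_cons] at hlen ⊢; omega
      · intro x hx
        rcases List.mem_cons.mp hx with rfl | hx
        · exact le_refl _
        rcases List.mem_cons.mp hx with rfl | hx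
        · omega
        · have := hle x hx; omega
      · exact List.isChain_cons_cons.mpr ⟨by omega, List.isChain_cons_cons.mpr ⟨by omega, hdec⟩⟩
      · intro x hx
        rcases List.mem_cons.mp hx with rfl | hx
        · omega
        rcases List.mem_cons.mp hx with rfl | hx
        · omega
        · exact hpos x hx
      · intro m hm
        rw [List.getLast?_cons_cons, List.getLast?_cons_cons, hlast] at hm
        simp at hm; subst hm; exact ⟨1, rfl⟩
      · refine List.isChain_cons_cons.mpr ⟨?_, List.isChain_cons_cons.mpr ⟨?_, hpar⟩⟩
        · rintro ⟨h1, -⟩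
          rw [Nat.odd_iff] at h1; omega
        · rintro ⟨-, h2⟩
          rw [Nat.odd_iff] at h2; omega
      · rw [List.getLast?_cons_cons, List.getLast?_cons_cons]; exact hlast
      · exact List.isChain_cons_cons.mpr ⟨by omega, List.isChain_cons_cons.mpr ⟨by omega, hgap⟩⟩

noncomputable def PP (t : ℕ) : Polynomial ℤ := ∏ i ∈ Finset.Icc 1 t, (1 - (X : Polynomial ℤ) ^ (2*i))

lemma PP_zero : PP 0 = 1 := by simp [PP]

lemma PP_succ (t : ℕ) : PP (t+1) = PP t * (1 - X ^ (2*(t+1))) := by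
  rw [PP, Finset.prod_Icc_succ_top (by omega), ← PP]

noncomputable def g : ℕ → ℕ → Polynomial ℤ
  | _, 0 => 1
  | 0, _+1 => 0
  | m+1, k+1 => g m k + X ^ (2*(k+1)) * g m (k+1)

lemma g_zero (m : ℕ) : g m 0 = 1 := by cases m <;> rfl
lemma g_succ (m k : ℕ) : g (m+1) (k+1) = g m k + X ^ (2*(k+1)) * g m (k+1) := rfl

lemma g_zero_of_lt : ∀ {m k : ℕ}, m < k → g m k = 0
  | 0, _+1, _ => rfl
  | m+1, k+1, h => by
      rw [g, g_zero_of_lt (m := m) (k := k) (by omega),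
        g_zero_of_lt (m := m) (k := k+1) (by omega)]; ring

lemma g_prod : ∀ m k : ℕ, k ≤ m → g m k * PP (m - k) * PP k = PP m
  | m, 0, _ => by simp [g, PP_zero]
  | m+1, k+1, h => by
      rcases eq_or_lt_of_le h with h' | h'
      · have hk : k = m := by omega
        subst hk
        rw [g, g_zero_of_lt (m := k) (k := k+1) (by omega)]
        have e0 : k + 1 - (k + 1) = 0 := by omega
        have ih := g_prod k k le_rfl
        rw [Nat.sub_self, PP_zero, mul_one] at ih
        rw [e0, PP_zero, PP_succ]
        linear_combination (1 - (X:Polynomial ℤ) ^ (2*(k+1))) * ih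
      · have hk : k + 1 ≤ m := by omega
        obtain ⟨a, ha⟩ : ∃ a, m - k = a + 1 := ⟨m - k - 1, by omega⟩
        have e1 : m + 1 - (k+1) = a + 1 := by omega
        have e2 : m - (k+1) = a := by omega
        have ih1 := g_prod m k (by omega)
        have ih2 := g_prod m (k+1) hk
        rw [ha, PP_succ] at ih1
        rw [e2, PP_succ (t := k)] at ih2
        rw [g, e1, PP_succ, PP_succ (t := k), PP_succ (t := m),
          show 2*(m+1) = 2*(a+1) + 2*(k+1) by omega, pow_add]
        linear_combination (1 - (X:Polynomial ℤ) ^ (2*(k+1))) * ih1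
          + (X:Polynomial ℤ) ^ (2*(k+1)) * (1 - (X:Polynomial ℤ) ^ (2*(a+1))) * ih2

def E (d n : ℕ) : ℕ := 2*n^2 + d^2 + 2*d - (2*d*n + n)

lemma E_sub_ok (a b : ℕ) : 2*a*b + b ≤ 2*b^2 + a^2 + 2*a := by
  zify
  nlinarith [sq_nonneg ((a:ℤ) - b), sq_nonneg ((b:ℤ) - 1), sq_nonneg (a:ℤ)]

lemma E_eq1 (d n : ℕ) : 2*(n+1) + E d n = E (d+1) (n+1) := by
  have h1 := E_sub_ok d n
  have h2 := E_sub_ok (d+1) (n+1)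
  unfold E at *
  zify [h1, h2] -- hope the sub conditions line up
  ring

lemma E_eq2 (e n k : ℕ) (hk : k + e + 1 = 2*n) :
    2*(n+1) + (2*(n+1)-1) + E e n = E (e+2) (n+1) + 2*k := by
  have h1 := E_sub_ok e n
  have h2 := E_sub_ok (e+2) (n+1)
  have hk' : (k:ℤ) + e + 1 = 2*n := by exact_mod_cast hk
  unfold E at *
  zify [h1, h2, show (1:ℕ) ≤ 2*(n+1) by omega]
  linear_combination (-2:ℤ) * hk'

lemma s_zero (m : ℕ) : s 0 m = 0 := by rw [s_eq, L_zero, Finset.sum_empty]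
lemma s_d_zero (d : ℕ) : s d 0 = 0 := by rw [s_eq, L_d_zero, Finset.sum_empty]

lemma s_two (d : ℕ) : s d 2 = if d = 1 then X^2 else 0 := by
  rw [s_eq, L_two]; split_ifs <;> simp

lemma s_rec (d n : ℕ) (hn : 2 ≤ n) :
    s (d+1) (2*n) = X^(2*n) * s d (2*n-2) + X^(2*n + (2*n-1)) * s (d-1) (2*n-2) := by
  classical
  have hdisj : Disjoint ((L d (2*n-2)).image (fun l => 2*n :: l))
      ((L (d-1) (2*n-2)).image (fun l => 2*n :: (2*n-1) :: l)) := by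
    rw [Finset.disjoint_left]
    rintro a ha hb
    obtain ⟨t, ht, rfl⟩ := Finset.mem_image.mp ha
    obtain ⟨u, hu, he⟩ := Finset.mem_image.mp hb
    rw [mem_L] at ht
    obtain ⟨-, -, hhead⟩ := ht
    obtain ⟨b, w, rfl⟩ : ∃ b w, t = b :: w := by
      cases t with
      | nil => simp at hhead
      | cons b w => exact ⟨b, w, rfl⟩
    have hb : b = 2*n - 2 := by simpa using hhead
    have : (2*n : ℕ) = 2*n ∧ ((2*n-1 : ℕ) = b ∧ u = w) := by
      constructor
      · rfl
      · have := he
        simp only [List.cons.injEq] at this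
        exact this.2
    omega
  rw [s_eq, L_rec d n hn, Finset.sum_union hdisj, Finset.sum_image, Finset.sum_image,
    s_eq, s_eq, Finset.mul_sum, Finset.mul_sum]
  · congr 1
    · apply Finset.sum_congr rfl
      intro l _
      rw [List.sum_cons, pow_add]
    · apply Finset.sum_congr rfl
      intro l _
      rw [List.sum_cons, List.sum_cons, ← add_assoc, pow_add]
  · intro a _ b _ h
    simpa using h
  · intro a _ b _ h
    simpa using h

lemma s_closed : ∀ n d : ℕ, s d (2*n) =
    if n ≤ d ∧ d + 1 ≤ 2*n then X^(E d n) * g (n-1) (2*n - d - 1) else 0 := by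
  intro n
  induction n with
  | zero =>
    intro d
    rw [if_neg (by omega)]
    exact s_d_zero d
  | succ N ihN =>
    cases N with
    | zero =>
      intro d
      rw [show 2*1 = 2 from rfl, s_two]
      by_cases hd : d = 1
      · subst hd
        rw [if_pos rfl, if_pos ⟨le_refl 1, by omega⟩,
          show 2*1 - 1 - 1 = 0 by omega, g_zero, show E 1 1 = 2 by rfl]
        ring
      · rw [if_neg hd, if_neg (by omega)]
    | succ M =>
      intro d
      cases d with
      | zero =>
        rw [if_neg (by omega)]
        exact s_zero _
      | succ e =>
        rw [s_rec e (M+2) (by omega), show 2*(M+2)-2 = 2*(M+1) by omega]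
        by_cases hrange : M+2 ≤ e+1 ∧ e+1+1 ≤ 2*(M+2)
        · rw [if_pos hrange]
          by_cases hetop : e = 2*M+2
          · subst hetop
            rw [show (2*M+2) - 1 = 2*M+1 by omega, ihN (2*M+2), ihN (2*M+1),
              if_neg (by omega), if_pos (by omega),
              show 2*(M+1) - (2*M+1) - 1 = 0 by omega,
              show 2*(M+2) - (2*M+2+1) - 1 = 0 by omega, g_zero, g_zero]
            have h2 := E_eq2 (2*M+1) (M+1) 0 (by omega)
            rw [show 2*M+1+2 = 2*M+2+1 by omega] at h2
            simp only [mul_zero, add_zero] at h2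
            rw [show M+1+1 = M+2 by omega] at h2 ⊢
            rw [mul_one, mul_one, mul_zero, zero_add, ← pow_add, h2]
          · -- middle: M+1 ≤ e ≤ 2M+1
            have hemid : M+1 ≤ e ∧ e ≤ 2*M+1 := by omega
            set k' := 2*M+1 - e with hk'
            rw [ihN e, if_pos (by omega), show 2*(M+1) - e - 1 = k' by omega,
              show 2*(M+2) - (e+1) - 1 = k'+1 by omega,
              ]
            simp only [Nat.add_sub_cancel]
            rw [g_succ]
            have hA : (X : Polynomial ℤ)^(2*(M+2)) * (X^(E e (M+1)) * g M k')
                = X^(E (e+1) (M+2)) * g M k' := by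
              have h1 := E_eq1 e (M+1)
              rw [show M+1+1 = M+2 by omega] at h1
              rw [← mul_assoc, ← pow_add, h1]
            by_cases he2 : M+2 ≤ e
            · rw [ihN (e-1), if_pos (by omega),
                show 2*(M+1) - (e-1) - 1 = k'+1 by omega]
              simp only [Nat.add_sub_cancel]
              have h2 := E_eq2 (e-1) (M+1) (k'+1) (by omega)
              rw [show e-1+2 = e+1 by omega, show M+1+1 = M+2 by omega] at h2
              have hB : (X : Polynomial ℤ)^(2*(M+2) + (2*(M+2)-1)) *
                  (X^(E (e-1) (M+1)) * g M (k'+1))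
                  = X^(E (e+1) (M+2)) * (X^(2*(k'+1)) * g M (k'+1)) := by
                rw [← mul_assoc, ← pow_add, h2, pow_add, mul_assoc]
              rw [show M+1+1 = M+2 by omega, hA, hB]
              ring
            · have he3 : e = M+1 := by omega
              have hkM : k' = M := by omega
              rw [ihN (e-1), if_neg (by omega), mul_zero,
                g_zero_of_lt (m := M) (k := k'+1) (by omega)]
              rw [show M+1+1 = M+2 by omega, hA]
              ring
        · rw [if_neg hrange, ihN e, ihN (e-1), if_neg (by omega), if_neg (by omega)]
          ring

lemma PP_def (t : ℕ) :
    (∏ i ∈ Finset.Icc 1 t, (1 - (X : Polynomial ℤ) ^ (2*i))) = PP t := rfl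

open Polynomial in
/-- `s(d, 2n) = 0` unless `n ≤ d ≤ 2n−1`, and for `n ≤ d ≤ 2n−1` one has, in `ℤ[q]`:
`s(d,2n)·∏_{i=1}^{2n−d−1}(1−q^{2i})·∏_{i=1}^{d−n}(1−q^{2i})
  = q^{2n²−2dn−n+d²+2d}·∏_{i=1}^{n−1}(1−q^{2i})`,
i.e. `s(d,2n)` equals `q^{2n²−2dn−n+d²+2d}` times the Gaussian binomial
coefficient `[n−1 choose 2n−d−1]` in the variable `q²`. -/
theorem s_even_closed_form :
    (∀ d n : ℕ, ¬(n ≤ d ∧ d + 1 ≤ 2 * n) → s d (2 * n) = 0) ∧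
    (∀ d n : ℕ, n ≤ d → d + 1 ≤ 2 * n →
      s d (2 * n) * (∏ i ∈ Finset.Icc 1 (2 * n - d - 1), (1 - (X : Polynomial ℤ) ^ (2 * i))) *
          (∏ i ∈ Finset.Icc 1 (d - n), (1 - (X : Polynomial ℤ) ^ (2 * i))) =
        X ^ (2 * n ^ 2 + d ^ 2 + 2 * d - 2 * d * n - n) *
          ∏ i ∈ Finset.Icc 1 (n - 1), (1 - (X : Polynomial ℤ) ^ (2 * i))) := by
  constructor
  · intro d n h
    rw [s_closed n d, if_neg h]
  · intro d n h1 h2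
    have hcf := s_closed n d
    rw [if_pos ⟨h1, h2⟩] at hcf
    rw [hcf, PP_def, PP_def, PP_def,
      show (2*n^2 + d^2 + 2*d - 2*d*n - n) = E d n from by rw [Nat.sub_sub]; rfl]
    have key := g_prod (n-1) (2*n - d - 1) (by omega)
    rw [show (n-1) - (2*n - d - 1) = d - n by omega] at key
    linear_combination (X : Polynomial ℤ)^(E d n) * key
end

section
/- Every basal billiard partition with exactly d parts whose largest part equals 2n has exactly d − n odd parts, and every basal billiard partition with exactly d parts whose largest part equals 2n+1 also has exactly d − n odd parts. -/
lemma basal_aux : ∀ l : List ℕ, IsBasal l → ∀ h, l.head? = some h →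
    l.countP (fun x => x % 2 == 1) + h / 2 = l.length
  | [], _, h, hh => by simp at hh
  | [a], hb, h, hh => by
    simp only [List.head?_cons, Option.some.injEq] at hh
    have h2 : a = 2 := by
      have := hb.2.1
      simp [List.getLast?] at this
      omega
    subst hh h2
    simp
  | a :: b :: t, hb, h, hh => by
    simp only [List.head?_cons, Option.some.injEq] at hh
    subst hh
    obtain ⟨⟨hne, hdec, hpos, hlast, hodd⟩, hl2, hgap⟩ := hb
    have hdec1 : b < a := (List.isChain_cons_cons.mp hdec).1
    have hgap1 : a - b ≤ 2 := (List.isChain_cons_cons.mp hgap).1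
    have hodd1 : ¬(Odd a ∧ Odd b) := (List.isChain_cons_cons.mp hodd).1
    have hb' : IsBasal (b :: t) := by
      refine ⟨⟨by simp, (List.isChain_cons_cons.mp hdec).2, fun x hx => hpos x (by simp [hx]),
        ?_, (List.isChain_cons_cons.mp hodd).2⟩, ?_, (List.isChain_cons_cons.mp hgap).2⟩
      · rw [List.getLast?_cons_cons] at hl2
        rw [hl2]; intro m hm; simp at hm; subst hm; exact even_two
      · rw [List.getLast?_cons_cons] at hl2; exact hl2
    have ih := basal_aux (b :: t) hb' b rfl
    simp only [List.countP_cons, List.length_cons] at ih ⊢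
    have hoddarith : a % 2 = 1 → b % 2 = 0 := by
      intro ha
      by_contra hbo
      exact hodd1 ⟨Nat.odd_iff.mpr ha, Nat.odd_iff.mpr (by omega)⟩
    by_cases hpb : b % 2 = 1
    · have hbt : (b % 2 == 1) = true := by simp [hpb]
      have hpa : a % 2 = 0 := by
        by_contra h'
        exact hodd1 ⟨Nat.odd_iff.mpr (by omega), Nat.odd_iff.mpr hpb⟩
      have hat : (a % 2 == 1) = false := by simp [hpa]
      simp only [hbt, hat, Bool.false_eq_true, if_false, if_true, reduceIte] at *
      omega
    · have hbt : (b % 2 == 1) = false := by simp; omega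
      simp only [hbt, if_false] at *
      by_cases hpa : a % 2 = 1
      · have hat : (a % 2 == 1) = true := by simp [hpa]
        simp only [hat, Bool.false_eq_true, if_false, if_true, reduceIte] at *
        omega
      · have hat : (a % 2 == 1) = false := by simp; omega
        simp only [hat, Bool.false_eq_true, if_false, if_true, reduceIte] at *
        omega

/-- A basal billiard partition with `d` parts and largest part `2n` has exactly
`d − n` odd parts, and a basal billiard partition with `d` parts and largest
part `2n+1` also has exactly `d − n` odd parts. -/
theorem basal_number_of_odd_parts :
    (∀ (l : List ℕ) (n : ℕ), IsBasal l → l.head? = some (2 * n) →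
      l.countP (fun x => x % 2 == 1) + n = l.length) ∧
    (∀ (l : List ℕ) (n : ℕ), IsBasal l → l.head? = some (2 * n + 1) →
      l.countP (fun x => x % 2 == 1) + n = l.length) := by
  constructor
  · intro l n hb hh
    have := basal_aux l hb (2 * n) hh
    omega
  · intro l n hb hh
    have := basal_aux l hb (2 * n + 1) hh
    omega
end

section
/- Fix an integer d ≥ 1. In the ring ℤ[x][[q]] of formal power series in q with coefficients in ℤ[x], the following identity holds: (∑_{π ∈ D_d} x^{w(π)} q^{|π|}) · ∏_{i=1}^{d}(1 − q^{2i}) = ∑_{π ∈ B_d} x^{w(π)} q^{|π|}, where D_d is the set of all Euclidean billiard partitions with exactly d parts, B_d is the (finite) set of all basal billiard partitions with exactly d parts, |π| is the sum of the parts, and w(π) is the weight exponent of π. -/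
/-- The weight exponent `w(π)` of an Euclidean billiard partition with `d`
parts, `s` of which are odd: `w(π) = d − 1 − 2s` if the largest part is even,
and `w(π) = d − 2s` if the largest part is odd (for Euclidean billiard
partitions these values are nonnegative). -/
def wexp (l : List ℕ) : ℕ :=
  if (l.head?.getD 0) % 2 = 0 then l.length - 1 - 2 * l.countP (fun x => x % 2 == 1)
  else l.length - 2 * l.countP (fun x => x % 2 == 1)

open Classical Polynomial in
/-- The generating series `∑_{π ∈ D_d} x^{w(π)} q^{|π|} ∈ ℤ[x][[q]]` of all
Euclidean billiard partitions with exactly `d` parts: its coefficient at `q^N`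
is the (finite) sum of `x^{w(π)}` over Euclidean billiard partitions `π` with
`d` parts and `|π| = N` (all parts of such a partition are `≤ N`, so it is
encoded exactly once as a function `Fin d → Fin (N+1)`). -/
noncomputable def Dseries (d : ℕ) : PowerSeries (Polynomial ℤ) :=
  PowerSeries.mk fun N =>
    ∑ f : Fin d → Fin (N + 1),
      if IsEBP (List.ofFn fun i => (f i : ℕ)) ∧
          (List.ofFn fun i => (f i : ℕ)).sum = N
      then X ^ wexp (List.ofFn fun i => (f i : ℕ)) else 0

open Classical Polynomial in
/-- The generating series `∑_{π ∈ B_d} x^{w(π)} q^{|π|} ∈ ℤ[x][[q]]` of all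
basal billiard partitions with exactly `d` parts. -/
noncomputable def Bseries (d : ℕ) : PowerSeries (Polynomial ℤ) :=
  PowerSeries.mk fun N =>
    ∑ f : Fin d → Fin (N + 1),
      if IsBasal (List.ofFn fun i => (f i : ℕ)) ∧
          (List.ofFn fun i => (f i : ℕ)).sum = N
      then X ^ wexp (List.ofFn fun i => (f i : ℕ)) else 0

namespace EBP
variable {d : ℕ}

def vget (g : Fin d → ℕ) (p : ℕ) : ℕ := if h : p < d then g ⟨p, h⟩ else 0

def EBPv (d : ℕ) (g : Fin d → ℕ) : Prop :=
  (∀ p, p < d → 0 < vget g p) ∧ (∀ p, p + 1 < d → vget g (p+1) < vget g p) ∧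
  vget g (d-1) % 2 = 0 ∧ (∀ p, p + 1 < d → ¬(vget g p % 2 = 1 ∧ vget g (p+1) % 2 = 1))

def Basalv (d : ℕ) (g : Fin d → ℕ) : Prop :=
  EBPv d g ∧ vget g (d-1) = 2 ∧ ∀ p, p + 1 < d → vget g p - vget g (p+1) ≤ 2

def oddCount (g : Fin d → ℕ) : ℕ := (Finset.univ.filter fun j => g j % 2 = 1).card

def wexpv (d : ℕ) (g : Fin d → ℕ) : ℕ :=
  if vget g 0 % 2 = 0 then d - 1 - 2 * oddCount g else d - 2 * oddCount g

lemma vget_lt (g : Fin d → ℕ) (p : ℕ) (h : p < d) : vget g p = g ⟨p, h⟩ := dif_pos h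

lemma length_ofFn' (g : Fin d → ℕ) : (List.ofFn g).length = d := List.length_ofFn

lemma get_ofFn' (g : Fin d → ℕ) (p : ℕ) (h : p < (List.ofFn g).length) :
    (List.ofFn g).get ⟨p, h⟩ = vget g p := by
  rw [List.get_ofFn]
  rw [vget_lt g p (by simpa [length_ofFn'] using h)]
  rfl

lemma getLast?_ofFn' (g : Fin d → ℕ) (hd : 0 < d) :
    (List.ofFn g).getLast? = some (vget g (d-1)) := by
  have h : d - 1 < (List.ofFn g).length := by simp [length_ofFn']; omega
  rw [List.getLast?_eq_getElem?, length_ofFn', List.getElem?_eq_getElem h]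
  simp only [List.getElem_ofFn]
  rw [vget_lt g (d-1) (by omega)]

lemma head?_ofFn' (g : Fin d → ℕ) (hd : 0 < d) :
    (List.ofFn g).head? = some (vget g 0) := by
  rcases d with _ | e
  · omega
  · rw [List.ofFn_succ]
    simp [vget]

lemma countP_ofFn' (g : Fin d → ℕ) :
    (List.ofFn g).countP (fun x => x % 2 == 1) = oddCount g := by
  induction d with
  | zero => simp [oddCount]
  | succ e ih =>
      rw [List.ofFn_succ, List.countP_cons, ih]
      unfold oddCount
      rw [Finset.card_filter, Finset.card_filter, Fin.sum_univ_succ]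
      simp only [Function.comp]
      by_cases h : g 0 % 2 = 1 <;> simp [h] <;> omega

lemma chain'_ofFn_iff (g : Fin d → ℕ) (R : ℕ → ℕ → Prop) :
    (List.ofFn g).Chain' R ↔ ∀ p, p + 1 < d → R (vget g p) (vget g (p+1)) := by
  rw [show (List.ofFn g).Chain' R ↔ (List.ofFn g).IsChain R from Iff.rfl, List.isChain_iff_getElem]
  constructor
  · intro h p hp
    have := h p (by simp [length_ofFn']; omega)
    simp only [List.getElem_ofFn] at this
    rwa [vget_lt g p (by omega), vget_lt g (p+1) hp]
  · intro h i hi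
    have hi' : i + 1 < d := by simp [length_ofFn'] at hi; omega
    rw [List.getElem_ofFn, List.getElem_ofFn, ← vget_lt g i (by omega), ← vget_lt g (i+1) hi']
    exact h i (by simp [length_ofFn'] at hi; omega)

lemma isEBP_iff (g : Fin d → ℕ) (hd : 0 < d) :
    IsEBP (List.ofFn g) ↔ EBPv d g := by
  unfold IsEBP EBPv
  rw [chain'_ofFn_iff, chain'_ofFn_iff, getLast?_ofFn' g hd]
  constructor
  · rintro ⟨-, h2, h3, h4, h5⟩
    refine ⟨?_, h2, ?_, ?_⟩
    · intro p hp
      exact h3 _ (by rw [List.mem_ofFn]; exact ⟨⟨p, hp⟩, (vget_lt g p hp).symm⟩)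
    · have := h4 _ rfl
      rw [Nat.even_iff] at this; exact this
    · intro p hp
      have := h5 p hp
      simp only [Nat.odd_iff] at this
      exact this
  · rintro ⟨h1, h2, h3, h4⟩
    refine ⟨?_, h2, ?_, ?_, ?_⟩
    · intro h
      have : (List.ofFn g).length = 0 := by rw [h]; rfl
      rw [length_ofFn'] at this; omega
    · intro x hx
      rw [List.mem_ofFn] at hx
      obtain ⟨i, rfl⟩ := hx
      have := h1 i i.isLt
      rwa [vget_lt g i i.isLt] at this
    · intro m hm
      rw [Option.mem_def, Option.some_inj] at hm
      subst hm
      rw [Nat.even_iff]; exact h3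
    · intro p hp
      have := h4 p hp
      simp only [Nat.odd_iff]
      exact this

lemma isBasal_iff (g : Fin d → ℕ) (hd : 0 < d) :
    IsBasal (List.ofFn g) ↔ Basalv d g := by
  unfold IsBasal Basalv
  rw [isEBP_iff g hd, chain'_ofFn_iff, getLast?_ofFn' g hd]
  simp

lemma wexp_ofFn (g : Fin d → ℕ) (hd : 0 < d) :
    wexp (List.ofFn g) = wexpv d g := by
  unfold wexp wexpv
  rw [head?_ofFn' g hd, countP_ofFn', length_ofFn']
  rfl

end EBP


namespace EBP
variable {d : ℕ}

def addv (i : ℕ) (g : Fin d → ℕ) : Fin d → ℕ := fun j => if (j : ℕ) < i then g j + 2 else g j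
def subv (i : ℕ) (g : Fin d → ℕ) : Fin d → ℕ := fun j => if (j : ℕ) < i then g j - 2 else g j

lemma vget_addv (i : ℕ) (g : Fin d → ℕ) (p : ℕ) :
    vget (addv i g) p = if p < i ∧ p < d then vget g p + 2 else vget g p := by
  by_cases h : p < d
  · rw [vget_lt _ p h, vget_lt g p h]
    by_cases h2 : p < i <;> simp [addv, h, h2]
  · simp [vget, h]

lemma vget_subv (i : ℕ) (g : Fin d → ℕ) (p : ℕ) :
    vget (subv i g) p = if p < i ∧ p < d then vget g p - 2 else vget g p := by
  by_cases h : p < d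
  · rw [vget_lt _ p h, vget_lt g p h]
    by_cases h2 : p < i <;> simp [subv, h, h2]
  · simp [vget, h]

lemma subv_addv (i : ℕ) (g : Fin d → ℕ) : subv i (addv i g) = g := by
  funext j
  by_cases h : (j : ℕ) < i <;> simp [subv, addv, h]

lemma addv_subv (i : ℕ) (g : Fin d → ℕ) (h : ∀ j : Fin d, (j : ℕ) < i → 2 ≤ g j) :
    addv i (subv i g) = g := by
  funext j
  by_cases hj : (j : ℕ) < i
  · have := h j hj; simp [subv, addv, hj]; omega
  · simp [subv, addv, hj]

lemma card_filter_lt (i : ℕ) (hi : i ≤ d) :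
    ∑ j : Fin d, (if (j : ℕ) < i then 2 else 0) = 2 * i := by
  rw [Fin.sum_univ_eq_sum_range (fun p => if p < i then 2 else 0) d]
  rw [← Finset.sum_subset (Finset.range_subset_range.2 hi)
    (by intro x hx hx2; simp at hx2 ⊢; omega)]
  simp [Finset.sum_ite_of_true]
  omega

lemma sum_addv (i : ℕ) (g : Fin d → ℕ) (hi : i ≤ d) :
    ∑ j, addv i g j = (∑ j, g j) + 2 * i := by
  unfold addv
  rw [← card_filter_lt i hi, ← Finset.sum_add_distrib]
  congr 1; funext j; by_cases h : (j : ℕ) < i <;> simp [h]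

lemma sum_subv (i : ℕ) (g : Fin d → ℕ) (hi : i ≤ d)
    (h : ∀ j : Fin d, (j : ℕ) < i → 2 ≤ g j) :
    (∑ j, subv i g j) + 2 * i = ∑ j, g j := by
  conv_rhs => rw [← addv_subv i g h]
  rw [sum_addv i _ hi]

/-- Lower bound on entries of an EBP. -/
lemma ebpv_lb (g : Fin d → ℕ) (hg : EBPv d g) : ∀ k p, p + k = d - 1 → p < d → 2 + k ≤ vget g p := by
  intro k
  induction k with
  | zero =>
      intro p hp hpd
      have h1 := hg.1 p hpd
      have h3 := hg.2.2.1
      have : p = d - 1 := by omega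
      subst this
      omega
  | succ k ih =>
      intro p hp hpd
      have h2 := hg.2.1 p (by omega)
      have := ih (p+1) (by omega) (by omega)
      omega

lemma ebpv_lb' (g : Fin d → ℕ) (hg : EBPv d g) (p : ℕ) (hp : p < d) :
    2 + (d - 1 - p) ≤ vget g p := ebpv_lb g hg (d - 1 - p) p (by omega) hp

lemma ebpv_two_le (g : Fin d → ℕ) (hg : EBPv d g) (j : Fin d) : 2 ≤ g j := by
  have := ebpv_lb' g hg j j.isLt
  rw [vget_lt g j j.isLt] at this
  simp at this ⊢
  omega

/-- Gap condition: subtracting 2 from the first `i` parts is legal. -/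
def Gap (d i : ℕ) (g : Fin d → ℕ) : Prop :=
  if i < d then vget g i + 2 < vget g (i-1) else 4 ≤ vget g (d-1)

lemma ebpv_addv (g : Fin d → ℕ) (hg : EBPv d g) (i : ℕ) (hi : i ≤ d) :
    EBPv d (addv i g) := by
  obtain ⟨h1, h2, h3, h4⟩ := hg
  refine ⟨?_, ?_, ?_, ?_⟩
  · intro p hp
    have := h1 p hp
    rw [vget_addv]
    split <;> omega
  · intro p hp
    have := h2 p hp
    rw [vget_addv, vget_addv]
    split <;> split <;> omega
  · rw [vget_addv]
    split <;> omega
  · intro p hp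
    have := h4 p hp
    rw [vget_addv, vget_addv]
    split <;> split <;> omega

lemma gap_addv (g : Fin d → ℕ) (hg : EBPv d g) (i : ℕ) (hi1 : 1 ≤ i) (hi : i ≤ d) (hd : 0 < d) :
    Gap d i (addv i g) := by
  unfold Gap
  simp only [vget_addv]
  by_cases h : i < d
  · have := hg.2.1 (i-1) (by omega)
    have heq : i - 1 + 1 = i := by omega
    rw [heq] at this
    simp only [if_pos h]
    split <;> split <;> omega
  · have h1 := hg.1 (d-1) (by omega)
    have h3 := hg.2.2.1
    simp only [if_neg h]
    split <;> omega

/-- Validity: result of subtraction is EBP iff original EBP and gap condition. -/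
lemma ebpv_subv_iff (g : Fin d → ℕ) (i : ℕ) (hi1 : 1 ≤ i) (hi : i ≤ d) (hd : 0 < d) :
    EBPv d (subv i g) ↔ (EBPv d g ∧ Gap d i g) := by
  constructor
  · rintro hs
    obtain ⟨s1, s2, s3, s4⟩ := hs
    -- entries below i are ≥ 4
    have hge : ∀ p, p < i → 4 ≤ vget g p := by
      intro p hp
      have hpd : p < d := by omega
      have := ebpv_lb' (subv i g) ⟨s1, s2, s3, s4⟩ p hpd
      rw [vget_subv] at this
      by_cases hlast : p = d - 1
      · -- p = d-1 and p < i ≤ d means i = d; use parity of last entry of subv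
        have h3 := s3
        rw [vget_subv] at h3
        simp only [if_pos (And.intro hp hpd)] at this h3
        have := s1 p hpd
        rw [vget_subv, if_pos (And.intro hp hpd)] at this
        subst hlast
        omega
      · simp only [if_pos (And.intro hp hpd)] at this
        omega
    have hEg : EBPv d g := by
      refine ⟨?_, ?_, ?_, ?_⟩
      · intro p hp
        have := s1 p hp
        rw [vget_subv] at this
        split at this <;> omega
      · intro p hp
        have := s2 p hp
        rw [vget_subv, vget_subv] at this
        by_cases c1 : p < i
        · have g1 := hge p c1
          by_cases c2 : p + 1 < i
          · have g2 := hge (p+1) c2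
            simp only [if_pos (And.intro c1 (by omega : p < d)),
              if_pos (And.intro c2 hp)] at this
            omega
          · simp only [if_pos (And.intro c1 (by omega : p < d)),
              if_neg (by omega : ¬((p+1) < i ∧ p + 1 < d))] at this
            omega
        · simp only [if_neg (by omega : ¬(p < i ∧ p < d)),
            if_neg (by omega : ¬((p+1) < i ∧ p + 1 < d))] at this
          omega
      · have h3 := s3
        rw [vget_subv] at h3
        by_cases c : d - 1 < i
        · have := hge (d-1) c
          simp only [if_pos (And.intro c (by omega : d - 1 < d))] at h3
          omega
        · simpa only [if_neg (by omega : ¬(d - 1 < i ∧ d - 1 < d))] using h3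
      · intro p hp
        have := s4 p hp
        rw [vget_subv, vget_subv] at this
        by_cases c1 : p < i <;> by_cases c2 : p + 1 < i
        · have g1 := hge p c1; have g2 := hge (p+1) c2
          simp only [if_pos (And.intro c1 (by omega : p < d)), if_pos (And.intro c2 hp)] at this
          omega
        · have g1 := hge p c1
          simp only [if_pos (And.intro c1 (by omega : p < d)),
            if_neg (by omega : ¬((p+1) < i ∧ p + 1 < d))] at this
          omega
        · omega
        · simp only [if_neg (by omega : ¬(p < i ∧ p < d)),
            if_neg (by omega : ¬((p+1) < i ∧ p + 1 < d))] at this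
          omega
    refine ⟨hEg, ?_⟩
    unfold Gap
    by_cases c : i < d
    · have := s2 (i-1) (by omega)
      have heq : i - 1 + 1 = i := by omega
      rw [heq, vget_subv, vget_subv] at this
      have g1 := hge (i-1) (by omega)
      simp only [if_pos (And.intro (by omega : i - 1 < i) (by omega : i - 1 < d)),
        if_neg (by omega : ¬(i < i ∧ i < d)), if_pos c] at this ⊢
      omega
    · have := hge (d-1) (by omega)
      simp only [if_neg c]
      omega
  · rintro ⟨hg, hgap⟩
    have hlb := ebpv_lb' g hg
    obtain ⟨h1, h2, h3, h4⟩ := hg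
    unfold Gap at hgap
    refine ⟨?_, ?_, ?_, ?_⟩
    · intro p hp
      rw [vget_subv]
      split
      · rename_i hc
        by_cases hpd1 : p < d - 1
        · have := hlb p hp; omega
        · -- p = d-1 < i so i = d, gap gives ≥ 4
          have : ¬ i < d := by omega
          simp only [if_neg this] at hgap
          have hpe : p = d - 1 := by omega
          subst hpe; omega
      · exact h1 p hp
    · intro p hp
      have := h2 p hp
      rw [vget_subv, vget_subv]
      by_cases c1 : p < i <;> by_cases c2 : p + 1 < i
      · have := hlb (p+1) (by omega); have := hlb p (by omega)
        simp only [if_pos (And.intro c1 (by omega : p < d)), if_pos (And.intro c2 hp)]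
        omega
      · -- p + 1 = i, and p+1 < d so i < d: use gap
        have hid : i < d := by omega
        rw [if_pos hid] at hgap
        have hieq : i = p + 1 := by omega
        subst hieq
        simp only [Nat.add_sub_cancel] at hgap
        have := hlb p (by omega)
        simp only [if_pos (And.intro c1 (by omega : p < d)),
          if_neg (by omega : ¬(p + 1 < p + 1 ∧ p + 1 < d))]
        omega
      · omega
      · simp only [if_neg (by omega : ¬(p < i ∧ p < d)),
          if_neg (by omega : ¬((p+1) < i ∧ p + 1 < d))]
        omega
    · rw [vget_subv]
      split
      · rename_i hc
        have : ¬ i < d := by omega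
        simp only [if_neg this] at hgap
        omega
      · exact h3
    · intro p hp
      have := h4 p hp
      rw [vget_subv, vget_subv]
      have e1 := hlb p (by omega)
      have e2 := hlb (p+1) (by omega)
      split <;> split <;> omega

lemma gap_congr (g g' : Fin d → ℕ) (i j : ℕ) (hij : i < j) (hjd : j ≤ d)
    (h : ∀ p, i ≤ p → vget g p = vget g' p) (hd : 0 < d) :
    Gap d j g ↔ Gap d j g' := by
  unfold Gap
  by_cases c : j < d
  · rw [if_pos c, if_pos c, h j (by omega), h (j-1) (by omega)]
  · rw [if_neg c, if_neg c, h (d-1) (by omega)]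

lemma gap_not_basal (g : Fin d → ℕ) (i : ℕ) (hi1 : 1 ≤ i) (hi : i ≤ d)
    (hgap : Gap d i g) (hd : 0 < d) : ¬ Basalv d g := by
  rintro ⟨hE, hlast, hgaps⟩
  unfold Gap at hgap
  by_cases c : i < d
  · rw [if_pos c] at hgap
    have := hgaps (i-1) (by omega)
    have heq : i - 1 + 1 = i := by omega
    rw [heq] at this
    have := hE.2.1 (i-1) (by omega)
    rw [heq] at this
    omega
  · rw [if_neg c] at hgap
    omega

lemma not_basal_gap (g : Fin d → ℕ) (hE : EBPv d g) (hnb : ¬ Basalv d g) (hd : 0 < d) :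
    ∃ i, 1 ≤ i ∧ i ≤ d ∧ Gap d i g := by
  unfold Basalv at hnb
  push_neg at hnb
  have := hnb hE
  by_cases hlast : vget g (d-1) = 2
  · obtain ⟨p, hp, hgp⟩ := this hlast
    refine ⟨p + 1, by omega, by omega, ?_⟩
    unfold Gap
    rw [if_pos hp]
    have := hE.2.1 p hp
    simp only [(by omega : p + 1 - 1 = p)]
    omega
  · refine ⟨d, by omega, le_refl d, ?_⟩
    unfold Gap
    rw [if_neg (by omega)]
    have h1 := hE.1 (d-1) (by omega)
    have h3 := hE.2.2.1
    omega

lemma wexpv_congr (g g' : Fin d → ℕ) (h : ∀ j, g j % 2 = g' j % 2) :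
    wexpv d g = wexpv d g' := by
  unfold wexpv oddCount
  have hv : vget g 0 % 2 = vget g' 0 % 2 := by
    by_cases c : 0 < d
    · rw [vget_lt g 0 c, vget_lt g' 0 c]; exact h _
    · simp [vget, c]
  have hc : (Finset.univ.filter fun j => g j % 2 = 1).card
      = (Finset.univ.filter fun j : Fin d => g' j % 2 = 1).card := by
    congr 1
    apply Finset.filter_congr
    intro j _
    rw [h j]
  rw [hv, hc]

end EBP

namespace EBP
open Finset
instance gapDecidable (d i : ℕ) (g : Fin d → ℕ) : Decidable (Gap d i g) := by
  unfold Gap; infer_instance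

instance ebpvDecidable (d : ℕ) (g : Fin d → ℕ) : Decidable (EBPv d g) :=
  decidable_of_iff
    ((∀ p, p < d → 0 < vget g p) ∧ (∀ p, p < d → p + 1 < d → vget g (p+1) < vget g p) ∧
      vget g (d-1) % 2 = 0 ∧
      (∀ p, p < d → p + 1 < d → ¬(vget g p % 2 = 1 ∧ vget g (p+1) % 2 = 1)))
    (by
      unfold EBPv
      constructor
      · rintro ⟨a, b, c, e⟩
        exact ⟨a, fun p hp => b p (by omega) hp, c, fun p hp => e p (by omega) hp⟩
      · rintro ⟨a, b, c, e⟩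
        exact ⟨a, fun p _ hp => b p hp, c, fun p _ hp => e p hp⟩)

instance basalvDecidable (d : ℕ) (g : Fin d → ℕ) : Decidable (Basalv d g) :=
  decidable_of_iff
    (EBPv d g ∧ vget g (d-1) = 2 ∧ ∀ p, p < d → p + 1 < d → vget g p - vget g (p+1) ≤ 2)
    (by
      unfold Basalv
      constructor
      · rintro ⟨a, b, c⟩
        exact ⟨a, b, fun p hp => c p (by omega) hp⟩
      · rintro ⟨a, b, c⟩
        exact ⟨a, b, fun p _ hp => c p hp⟩)

def condP (d N : ℕ) (t : Finset ℕ) (g : Fin d → ℕ) : Prop :=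
  EBPv d g ∧ (∑ j, g j) + 2 * (∑ i ∈ t, i) = N

instance condPDecidable (d N : ℕ) (t : Finset ℕ) (g : Fin d → ℕ) : Decidable (condP d N t g) := by
  unfold condP; infer_instance

def theSet (d : ℕ) (t : Finset ℕ) (g : Fin d → ℕ) : Finset ℕ :=
  (Finset.Icc 1 d).filter (fun j => j ∈ t ∨ Gap d j g)

def invol (d N : ℕ) (a : Finset ℕ × (Fin d → ℕ)) : Finset ℕ × (Fin d → ℕ) :=
  if h : condP d N a.1 a.2 ∧ (theSet d a.1 a.2).Nonempty then
    if (theSet d a.1 a.2).max' h.2 ∈ a.1 then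
      (a.1.erase ((theSet d a.1 a.2).max' h.2), addv ((theSet d a.1 a.2).max' h.2) a.2)
    else (insert ((theSet d a.1 a.2).max' h.2) a.1, subv ((theSet d a.1 a.2).max' h.2) a.2)
  else a

variable {d : ℕ}

lemma mem_theSet {t : Finset ℕ} {g : Fin d → ℕ} {j : ℕ} :
    j ∈ theSet d t g ↔ (1 ≤ j ∧ j ≤ d) ∧ (j ∈ t ∨ Gap d j g) := by
  unfold theSet
  rw [Finset.mem_filter, Finset.mem_Icc]

lemma theSet_nonempty (hd : 1 ≤ d) {t : Finset ℕ} (ht : t ⊆ Finset.Icc 1 d)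
    {g : Fin d → ℕ} (hE : EBPv d g) (hnq : ¬(t = ∅ ∧ Basalv d g)) :
    (theSet d t g).Nonempty := by
  rcases t.eq_empty_or_nonempty with rfl | ⟨j, hj⟩
  · have hnb : ¬ Basalv d g := fun hb => hnq ⟨rfl, hb⟩
    obtain ⟨i, hi1, hi2, hgap⟩ := not_basal_gap g hE hnb hd
    exact ⟨i, mem_theSet.2 ⟨⟨hi1, hi2⟩, Or.inr hgap⟩⟩
  · have := ht hj
    rw [Finset.mem_Icc] at this
    exact ⟨j, mem_theSet.2 ⟨this, Or.inl hj⟩⟩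

lemma invol_flip (hd : 1 ≤ d) (N : ℕ) (t : Finset ℕ) (g : Fin d → ℕ)
    (ht : t ⊆ Finset.Icc 1 d) (hc : condP d N t g) (hne : (theSet d t g).Nonempty) :
    ∃ t' g', invol d N (t, g) = (t', g') ∧
      condP d N t' g' ∧ t' ⊆ Finset.Icc 1 d ∧ (∀ j, g' j % 2 = g j % 2) ∧
      ((-1 : Polynomial ℤ) ^ t'.card = -(-1) ^ t.card) ∧
      (t'.Nonempty ∨ ¬ Basalv d g') ∧
      invol d N (t', g') = (t, g) := by
  set i := (theSet d t g).max' hne with hidef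
  have hiS : i ∈ theSet d t g := Finset.max'_mem _ _
  obtain ⟨⟨hi1, hid⟩, hior⟩ := mem_theSet.1 hiS
  have hmax : ∀ j ∈ theSet d t g, j ≤ i := fun j hj => Finset.le_max' _ j hj
  have hfirst : invol d N (t, g)
      = if i ∈ t then (t.erase i, addv i g) else (insert i t, subv i g) := by
    unfold invol
    rw [dif_pos (⟨hc, hne⟩ : condP d N (t, g).1 (t, g).2 ∧ (theSet d (t, g).1 (t, g).2).Nonempty)]
  by_cases hit : i ∈ t
  · -- erase / add branch
    have hE' : EBPv d (addv i g) := ebpv_addv g hc.1 i hid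
    have hgap' : Gap d i (addv i g) := gap_addv g hc.1 i hi1 hid (by omega)
    have hsum : i + ∑ x ∈ t.erase i, x = ∑ x ∈ t, x := Finset.add_sum_erase t (fun x => x) hit
    have hcond' : condP d N (t.erase i) (addv i g) := by
      refine ⟨hE', ?_⟩
      rw [sum_addv i g hid]
      have := hc.2
      omega
    have hne' : (theSet d (t.erase i) (addv i g)).Nonempty :=
      ⟨i, mem_theSet.2 ⟨⟨hi1, hid⟩, Or.inr hgap'⟩⟩
    have hmax' : (theSet d (t.erase i) (addv i g)).max' hne' = i := by
      apply le_antisymm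
      · apply Finset.max'_le
        intro j hj
        by_contra hji
        push_neg at hji
        obtain ⟨⟨hj1, hjd⟩, hjor⟩ := mem_theSet.1 hj
        rcases hjor with hjt | hjg
        · have : j ∈ t := Finset.mem_of_mem_erase hjt
          have := hmax j (mem_theSet.2 ⟨⟨hj1, hjd⟩, Or.inl this⟩)
          omega
        · have : Gap d j g := by
            rw [gap_congr g (addv i g) i j hji hjd ?_ (by omega)]
            · exact hjg
            · intro p hp
              rw [vget_addv]
              rw [if_neg (by omega)]
          have := hmax j (mem_theSet.2 ⟨⟨hj1, hjd⟩, Or.inr this⟩)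
          omega
      · exact Finset.le_max' _ i (mem_theSet.2 ⟨⟨hi1, hid⟩, Or.inr hgap'⟩)
    refine ⟨t.erase i, addv i g, by rw [hfirst, if_pos hit], hcond', ?_, ?_, ?_, ?_, ?_⟩
    · exact (Finset.erase_subset _ _).trans ht
    · intro j
      unfold addv
      split <;> omega
    · have hcpos : 1 ≤ t.card := Finset.card_pos.2 ⟨i, hit⟩
      rw [Finset.card_erase_of_mem hit]
      obtain ⟨k, hk⟩ : ∃ k, t.card = k + 1 := ⟨t.card - 1, by omega⟩
      rw [hk]
      simp [pow_succ]
    · exact Or.inr (gap_not_basal (addv i g) i hi1 hid hgap' (by omega))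
    · unfold invol
      rw [dif_pos (⟨hcond', hne'⟩ :
        condP d N (t.erase i, addv i g).1 (t.erase i, addv i g).2 ∧
          (theSet d (t.erase i, addv i g).1 (t.erase i, addv i g).2).Nonempty)]
      simp only
      rw [hmax', if_neg (Finset.notMem_erase i t)]
      rw [Finset.insert_erase hit, subv_addv]
  · -- insert / sub branch
    have hgap : Gap d i g := hior.resolve_left hit
    have hE' : EBPv d (subv i g) := (ebpv_subv_iff g i hi1 hid (by omega)).2 ⟨hc.1, hgap⟩
    have h2le : ∀ j : Fin d, (j : ℕ) < i → 2 ≤ g j := fun j _ => ebpv_two_le g hc.1 j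
    have hsum := sum_subv i g hid h2le
    have hcond' : condP d N (insert i t) (subv i g) := by
      refine ⟨hE', ?_⟩
      rw [Finset.sum_insert hit]
      have := hc.2
      omega
    have hne' : (theSet d (insert i t) (subv i g)).Nonempty :=
      ⟨i, mem_theSet.2 ⟨⟨hi1, hid⟩, Or.inl (Finset.mem_insert_self i t)⟩⟩
    have hmax' : (theSet d (insert i t) (subv i g)).max' hne' = i := by
      apply le_antisymm
      · apply Finset.max'_le
        intro j hj
        by_contra hji
        push_neg at hji
        obtain ⟨⟨hj1, hjd⟩, hjor⟩ := mem_theSet.1 hj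
        rcases hjor with hjt | hjg
        · rcases Finset.mem_insert.1 hjt with rfl | hjt'
          · omega
          · have := hmax j (mem_theSet.2 ⟨⟨hj1, hjd⟩, Or.inl hjt'⟩)
            omega
        · have : Gap d j g := by
            rw [gap_congr g (subv i g) i j hji hjd ?_ (by omega)]
            · exact hjg
            · intro p hp
              rw [vget_subv]
              rw [if_neg (by omega)]
          have := hmax j (mem_theSet.2 ⟨⟨hj1, hjd⟩, Or.inr this⟩)
          omega
      · exact Finset.le_max' _ i (mem_theSet.2 ⟨⟨hi1, hid⟩, Or.inl (Finset.mem_insert_self i t)⟩)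
    refine ⟨insert i t, subv i g, by rw [hfirst, if_neg hit], hcond', ?_, ?_, ?_, ?_, ?_⟩
    · exact Finset.insert_subset (Finset.mem_Icc.2 ⟨hi1, hid⟩) ht
    · intro j
      unfold subv
      split
      · have := h2le j (by assumption)
        omega
      · rfl
    · rw [Finset.card_insert_of_notMem hit]
      simp [pow_succ]
    · exact Or.inl ⟨i, Finset.mem_insert_self i t⟩
    · unfold invol
      rw [dif_pos (⟨hcond', hne'⟩ :
        condP d N (insert i t, subv i g).1 (insert i t, subv i g).2 ∧
          (theSet d (insert i t, subv i g).1 (insert i t, subv i g).2).Nonempty)]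
      simp only
      rw [hmax', if_pos (Finset.mem_insert_self i t)]
      rw [Finset.erase_insert hit, addv_subv i g h2le]

end EBP

namespace EBP
open Finset Polynomial

lemma claimA (d N : ℕ) (hd : 1 ≤ d) :
    ∑ t ∈ (Finset.Icc 1 d).powerset,
      ∑ g ∈ Fintype.piFinset (fun _ : Fin d => Finset.range (N+1)),
        (if condP d N t g then ((-1 : Polynomial ℤ)) ^ t.card * X ^ (wexpv d g) else 0)
    = ∑ g ∈ Fintype.piFinset (fun _ : Fin d => Finset.range (N+1)),
        (if Basalv d g ∧ (∑ j, g j) = N then (X : Polynomial ℤ) ^ (wexpv d g) else 0) := by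
  classical
  set pif := Fintype.piFinset (fun _ : Fin d => Finset.range (N+1)) with hpif
  set F : Finset ℕ × (Fin d → ℕ) → Polynomial ℤ :=
    fun a => if condP d N a.1 a.2 then ((-1 : Polynomial ℤ)) ^ a.1.card * X ^ (wexpv d a.2) else 0
    with hF
  have hprod : ∑ t ∈ (Finset.Icc 1 d).powerset, ∑ g ∈ pif,
      (if condP d N t g then ((-1 : Polynomial ℤ)) ^ t.card * X ^ (wexpv d g) else 0)
      = ∑ a ∈ (Finset.Icc 1 d).powerset ×ˢ pif, F a := by
    rw [Finset.sum_product]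
  rw [hprod]
  set P := (Finset.Icc 1 d).powerset ×ˢ pif with hP
  set Q : Finset ℕ × (Fin d → ℕ) → Prop := fun a => a.1 = ∅ ∧ Basalv d a.2 with hQ
  rw [← Finset.sum_filter_add_sum_filter_not P Q F]
  have hmemP : ∀ a : Finset ℕ × (Fin d → ℕ), a ∈ P ↔
      a.1 ⊆ Finset.Icc 1 d ∧ ∀ j, a.2 j < N + 1 := by
    intro a
    rw [hP, Finset.mem_product, Finset.mem_powerset, hpif, Fintype.mem_piFinset]
    simp [Finset.mem_range]
  -- the non-fixed part sums to zero
  have hzero : ∑ a ∈ P.filter (fun a => ¬ Q a), F a = 0 := by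
    apply Finset.sum_involution (fun a _ => invol d N a)
    · -- h : F a + F (invol a) = 0
      intro a ha
      rw [Finset.mem_filter] at ha
      obtain ⟨haP, haQ⟩ := ha
      obtain ⟨ha1, _⟩ := (hmemP a).1 haP
      by_cases hca : condP d N a.1 a.2
      · have hne : (theSet d a.1 a.2).Nonempty :=
          theSet_nonempty hd ha1 hca.1 (by rw [hQ] at haQ; exact haQ)
        obtain ⟨t', g', heq, hc', _, hpar, hsign, _, _⟩ :=
          invol_flip hd N a.1 a.2 ha1 hca hne
        have : invol d N a = (t', g') := by rwa [← Prod.mk.eta (p := a)]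
        rw [this, hF]
        simp only
        rw [if_pos hca, if_pos hc', hsign, wexpv_congr g' a.2 hpar]
        ring
      · have : invol d N a = a := by
          unfold invol
          rw [dif_neg (by tauto)]
        rw [this, hF]
        simp only
        rw [if_neg hca, add_zero]
    · -- g_ne
      intro a ha hFa
      rw [Finset.mem_filter] at ha
      obtain ⟨haP, haQ⟩ := ha
      obtain ⟨ha1, _⟩ := (hmemP a).1 haP
      intro heqa
      have hca : condP d N a.1 a.2 := by
        by_contra hca
        apply hFa
        rw [hF]; simp only; rw [if_neg hca]
      have hne : (theSet d a.1 a.2).Nonempty :=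
        theSet_nonempty hd ha1 hca.1 (by rw [hQ] at haQ; exact haQ)
      obtain ⟨t', g', heq, hc', _, hpar, hsign, _, _⟩ :=
        invol_flip hd N a.1 a.2 ha1 hca hne
      have hinva : invol d N a = (t', g') := by rwa [← Prod.mk.eta (p := a)]
      have hFF : F a + F (invol d N a) = 0 := by
        rw [hinva, hF]
        simp only
        rw [if_pos hca, if_pos hc', hsign, wexpv_congr g' a.2 hpar]
        ring
      rw [heqa] at hFF
      exact hFa (add_self_eq_zero.1 hFF)
    · -- g_mem
      intro a ha
      rw [Finset.mem_filter] at ha ⊢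
      obtain ⟨haP, haQ⟩ := ha
      obtain ⟨ha1, _⟩ := (hmemP a).1 haP
      by_cases hca : condP d N a.1 a.2
      · have hne : (theSet d a.1 a.2).Nonempty :=
          theSet_nonempty hd ha1 hca.1 (by rw [hQ] at haQ; exact haQ)
        obtain ⟨t', g', heq, hc', ht', hpar, hsign, hnb, _⟩ :=
          invol_flip hd N a.1 a.2 ha1 hca hne
        have hinva : invol d N a = (t', g') := by rwa [← Prod.mk.eta (p := a)]
        rw [hinva]
        constructor
        · rw [hmemP]
          refine ⟨ht', ?_⟩
          intro j
          show g' j < N + 1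
          have hsum := hc'.2
          have : g' j ≤ ∑ j, g' j :=
            Finset.single_le_sum (f := g') (fun i _ => Nat.zero_le _) (Finset.mem_univ j)
          omega
        · rw [hQ]
          rintro ⟨he, hb⟩
          have he' : t' = ∅ := he
          rcases hnb with hne' | hnb'
          · rw [he'] at hne'; exact Finset.not_nonempty_empty hne'
          · exact hnb' hb
      · have : invol d N a = a := by
          unfold invol
          rw [dif_neg (by tauto)]
        rw [this]
        exact ⟨haP, haQ⟩
    · -- g_inv
      intro a ha
      rw [Finset.mem_filter] at ha
      obtain ⟨haP, haQ⟩ := ha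
      obtain ⟨ha1, _⟩ := (hmemP a).1 haP
      by_cases hca : condP d N a.1 a.2
      · have hne : (theSet d a.1 a.2).Nonempty :=
          theSet_nonempty hd ha1 hca.1 (by rw [hQ] at haQ; exact haQ)
        obtain ⟨t', g', heq, hc', ht', hpar, hsign, hnb, hback⟩ :=
          invol_flip hd N a.1 a.2 ha1 hca hne
        have hinva : invol d N a = (t', g') := by rwa [← Prod.mk.eta (p := a)]
        rw [hinva, hback, Prod.mk.eta]
      · have : invol d N a = a := by
          unfold invol
          rw [dif_neg (by tauto)]
        rw [this, this]
  rw [hzero, add_zero]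
  -- the fixed part equals the basal sum
  have hbij : ∑ a ∈ P.filter Q, F a = ∑ g ∈ pif.filter (fun g => Basalv d g), F (∅, g) := by
    apply Finset.sum_nbij' (i := fun a => a.2) (j := fun g => (∅, g))
    · intro a ha
      rw [Finset.mem_filter] at ha ⊢
      obtain ⟨haP, haQ⟩ := ha
      rw [hP, Finset.mem_product] at haP
      exact ⟨haP.2, haQ.2⟩
    · intro g hg
      rw [Finset.mem_filter] at hg ⊢
      refine ⟨?_, rfl, hg.2⟩
      rw [hP, Finset.mem_product]
      exact ⟨Finset.empty_mem_powerset _, hg.1⟩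
    · intro a ha
      rw [Finset.mem_filter] at ha
      obtain ⟨-, haQ⟩ := ha
      rw [← haQ.1, Prod.mk.eta]
    · intro g hg
      rfl
    · intro a ha
      rw [Finset.mem_filter] at ha
      obtain ⟨-, haQ⟩ := ha
      rw [← haQ.1, Prod.mk.eta]
  rw [hbij]
  have hstep : ∑ g ∈ pif.filter (fun g => Basalv d g), F (∅, g)
      = ∑ g ∈ pif.filter (fun g => Basalv d g),
          (if Basalv d g ∧ (∑ j, g j) = N then (X : Polynomial ℤ) ^ (wexpv d g) else 0) := by
    apply Finset.sum_congr rfl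
    intro g hg
    rw [Finset.mem_filter] at hg
    have hA : condP d N ∅ g ↔ (Basalv d g ∧ (∑ j, g j) = N) := by
      unfold condP
      rw [Finset.sum_empty, mul_zero, add_zero]
      exact ⟨fun h => ⟨hg.2, h.2⟩, fun h => ⟨h.1.1, h.2⟩⟩
    have h1 : F (∅, g) = if condP d N ∅ g then (X : Polynomial ℤ) ^ (wexpv d g) else 0 := by
      rw [hF]
      simp only [Finset.card_empty, pow_zero, one_mul]
    rw [h1]
    exact if_congr hA rfl rfl
  rw [hstep]
  apply Finset.sum_subset (Finset.filter_subset _ _)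
  intro g hg hng
  rw [Finset.mem_filter, not_and] at hng
  rw [if_neg]
  rintro ⟨hb, -⟩
  exact hng hg hb

end EBP

namespace EBP
open Finset

lemma sum_fin_to_pi {M : Type*} [AddCommMonoid M] (d m : ℕ) (φ : (Fin d → ℕ) → M) :
    ∑ f : Fin d → Fin (m+1), φ (fun j => (f j : ℕ))
      = ∑ g ∈ Fintype.piFinset (fun _ : Fin d => Finset.range (m+1)), φ g := by
  apply Finset.sum_nbij' (i := fun f => fun j => ((f j : ℕ)))
    (j := fun g => fun j => (⟨g j % (m+1), Nat.mod_lt _ (Nat.succ_pos m)⟩ : Fin (m+1)))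
  · intro f _
    rw [Fintype.mem_piFinset]
    intro j; rw [Finset.mem_range]; exact (f j).isLt
  · intro g _; exact Finset.mem_univ _
  · intro f _
    funext j
    apply Fin.ext
    show (f j : ℕ) % (m+1) = f j
    exact Nat.mod_eq_of_lt (f j).isLt
  · intro g hg
    rw [Fintype.mem_piFinset] at hg
    funext j
    show (g j) % (m+1) = g j
    exact Nat.mod_eq_of_lt (Finset.mem_range.1 (hg j))
  · intro f _; rfl

lemma coeff_Dseries (d : ℕ) (hd : 1 ≤ d) (m : ℕ) :
    (PowerSeries.coeff (R := Polynomial ℤ) m) (Dseries d)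
      = ∑ g ∈ Fintype.piFinset (fun _ : Fin d => Finset.range (m+1)),
          (if EBPv d g ∧ (∑ j, g j) = m then (Polynomial.X : Polynomial ℤ) ^ (wexpv d g) else 0) := by
  classical
  unfold Dseries
  rw [PowerSeries.coeff_mk]
  rw [← sum_fin_to_pi d m (fun g =>
    if EBPv d g ∧ (∑ j, g j) = m then (Polynomial.X : Polynomial ℤ) ^ (wexpv d g) else 0)]
  apply Finset.sum_congr rfl
  intro f _
  rw [wexp_ofFn _ hd]
  exact if_congr (and_congr (isEBP_iff _ hd) (by rw [List.sum_ofFn])) rfl rfl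

lemma coeff_Bseries (d : ℕ) (hd : 1 ≤ d) (m : ℕ) :
    (PowerSeries.coeff (R := Polynomial ℤ) m) (Bseries d)
      = ∑ g ∈ Fintype.piFinset (fun _ : Fin d => Finset.range (m+1)),
          (if Basalv d g ∧ (∑ j, g j) = m then (Polynomial.X : Polynomial ℤ) ^ (wexpv d g) else 0) := by
  classical
  unfold Bseries
  rw [PowerSeries.coeff_mk]
  rw [← sum_fin_to_pi d m (fun g =>
    if Basalv d g ∧ (∑ j, g j) = m then (Polynomial.X : Polynomial ℤ) ^ (wexpv d g) else 0)]
  apply Finset.sum_congr rfl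
  intro f _
  rw [wexp_ofFn _ hd]
  exact if_congr (and_congr (isBasal_iff _ hd) (by rw [List.sum_ofFn])) rfl rfl

lemma rebound (d m N : ℕ) (hmN : m ≤ N) :
    ∑ g ∈ Fintype.piFinset (fun _ : Fin d => Finset.range (m+1)),
        (if EBPv d g ∧ (∑ j, g j) = m then (Polynomial.X : Polynomial ℤ) ^ (wexpv d g) else 0)
      = ∑ g ∈ Fintype.piFinset (fun _ : Fin d => Finset.range (N+1)),
        (if EBPv d g ∧ (∑ j, g j) = m then (Polynomial.X : Polynomial ℤ) ^ (wexpv d g) else 0) := by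
  apply Finset.sum_subset
  · intro g hg
    rw [Fintype.mem_piFinset] at hg ⊢
    intro j
    have := hg j
    rw [Finset.mem_range] at *
    omega
  · intro g hg hng
    rw [if_neg]
    rintro ⟨-, hs⟩
    apply hng
    rw [Fintype.mem_piFinset] at hg ⊢
    intro j
    rw [Finset.mem_range]
    have : g j ≤ ∑ j, g j :=
      Finset.single_le_sum (f := g) (fun i _ => Nat.zero_le _) (Finset.mem_univ j)
    omega

lemma Dterm (d N : ℕ) (hd : 1 ≤ d) (t : Finset ℕ) :
    (if 2 * (∑ i ∈ t, i) ≤ N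
      then (PowerSeries.coeff (R := Polynomial ℤ) (N - 2 * ∑ i ∈ t, i)) (Dseries d) else 0)
      = ∑ g ∈ Fintype.piFinset (fun _ : Fin d => Finset.range (N+1)),
          (if condP d N t g then (Polynomial.X : Polynomial ℤ) ^ (wexpv d g) else 0) := by
  by_cases h : 2 * (∑ i ∈ t, i) ≤ N
  · rw [if_pos h, coeff_Dseries d hd, rebound d _ N (by omega)]
    apply Finset.sum_congr rfl
    intro g _
    unfold condP
    exact if_congr (and_congr Iff.rfl (by constructor <;> intro <;> omega)) rfl rfl
  · rw [if_neg h]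
    symm
    apply Finset.sum_eq_zero
    intro g _
    rw [if_neg]
    rintro ⟨⟨-, hs⟩⟩
    omega

lemma prod_expand (d : ℕ) :
    (∏ i ∈ Finset.Icc 1 d, (1 - (PowerSeries.X : PowerSeries (Polynomial ℤ)) ^ (2 * i)))
      = ∑ t ∈ (Finset.Icc 1 d).powerset,
          (PowerSeries.C (R := Polynomial ℤ)) ((-1 : Polynomial ℤ) ^ t.card)
            * (PowerSeries.X : PowerSeries (Polynomial ℤ)) ^ (2 * ∑ i ∈ t, i) := by
  have h1 : ∀ i ∈ Finset.Icc 1 d, (1 : PowerSeries (Polynomial ℤ)) - PowerSeries.X ^ (2*i)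
      = -(PowerSeries.X ^ (2*i)) + 1 := by intros; ring
  rw [Finset.prod_congr rfl h1, Finset.prod_add]
  apply Finset.sum_congr rfl
  intro t ht
  rw [Finset.prod_const_one, mul_one]
  have h2 : ∀ i ∈ t, -((PowerSeries.X : PowerSeries (Polynomial ℤ))^(2*i))
      = (-1) * PowerSeries.X^(2*i) := by intros; ring
  rw [Finset.prod_congr rfl h2, Finset.prod_mul_distrib, Finset.prod_const,
    Finset.prod_pow_eq_pow_sum, ← Finset.mul_sum]
  congr 1
  rw [map_pow, map_neg, map_one]

end EBP


/-- For every `d ≥ 1`, in `ℤ[x][[q]]`: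
`(∑_{π ∈ D_d} x^{w(π)} q^{|π|}) · ∏_{i=1}^{d}(1 − q^{2i}) = ∑_{π ∈ B_d} x^{w(π)} q^{|π|}`. -/
theorem weighted_ebp_eq_basal_times_product (d : ℕ) (hd : 1 ≤ d) :
    Dseries d *
        ∏ i ∈ Finset.Icc 1 d,
          (1 - (PowerSeries.X : PowerSeries (Polynomial ℤ)) ^ (2 * i)) =
      Bseries d := by
  apply PowerSeries.ext
  intro N
  rw [EBP.prod_expand d, Finset.mul_sum, map_sum]
  have hterm : ∀ t ∈ (Finset.Icc 1 d).powerset,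
      (PowerSeries.coeff (R := Polynomial ℤ) N) (Dseries d *
        ((PowerSeries.C (R := Polynomial ℤ)) ((-1 : Polynomial ℤ) ^ t.card)
          * PowerSeries.X ^ (2 * ∑ i ∈ t, i)))
      = ∑ g ∈ Fintype.piFinset (fun _ : Fin d => Finset.range (N+1)),
          (if EBP.condP d N t g
            then ((-1 : Polynomial ℤ)) ^ t.card * Polynomial.X ^ (EBP.wexpv d g) else 0) := by
    intro t ht
    have hcomm : Dseries d * ((PowerSeries.C (R := Polynomial ℤ)) ((-1 : Polynomial ℤ) ^ t.card)
          * PowerSeries.X ^ (2 * ∑ i ∈ t, i))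
        = (PowerSeries.C (R := Polynomial ℤ)) ((-1 : Polynomial ℤ) ^ t.card)
          * (Dseries d * PowerSeries.X ^ (2 * ∑ i ∈ t, i)) := by ring
    rw [hcomm, PowerSeries.coeff_C_mul, PowerSeries.coeff_mul_X_pow',
      EBP.Dterm d N hd t, Finset.mul_sum]
    apply Finset.sum_congr rfl
    intro g _
    rw [mul_ite, mul_zero]
  rw [Finset.sum_congr rfl hterm, EBP.claimA d N hd, EBP.coeff_Bseries d hd N]
end
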